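/- arXiv:2311.10124 — 9 statements merged into one kernel-verified Lean document; each statement's English description precedes it below -/
import Mathlib

section
/- Let n be a positive integer and let ρ be a complex number with ρ ≠ 0 and ρ ≠ 1. Then the Apostol-Bernoulli number satisfies 𝓑_n(ρ) = (n·ρ/(ρ−1)^n) · Σ_{s=0}^{n−1} (−1)^s · s! · ρ^{s−1} · (ρ−1)^{n−1−s} · S₂(n−1,s). -/
open Finset Nat

/-- The Apostol-Bernoulli numbers `𝓑_n(ρ)`, defined by the generating function
`t / (ρ e^t - 1) = Σ_{n≥0} 𝓑_n(ρ) t^n / n!` (as a formal power series). -/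
noncomputable def apostolBernoulliNum (n : ℕ) (ρ : ℂ) : ℂ :=
  (n ! : ℂ) * PowerSeries.coeff n (PowerSeries.X * (ρ • PowerSeries.exp ℂ - 1)⁻¹)

/-- The Stirling numbers of the second kind `S₂(n,c)`, defined by
`(e^t - 1)^c = Σ_{n≥0} c! S₂(n,c) t^n / n!`. -/
noncomputable def stirling2 (n c : ℕ) : ℂ :=
  ((n ! : ℂ) / (c ! : ℂ)) * PowerSeries.coeff n ((PowerSeries.exp ℂ - 1) ^ c)

theorem stmt0 (n : ℕ) (hn : 0 < n) (ρ : ℂ) (hρ0 : ρ ≠ 0) (hρ1 : ρ ≠ 1) :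
    apostolBernoulliNum n ρ =
      ((n : ℂ) * ρ / (ρ - 1) ^ n) *
        ∑ s ∈ Finset.range n,
          (-1 : ℂ) ^ s * (s ! : ℂ) * ρ ^ ((s : ℤ) - 1) * (ρ - 1) ^ (n - 1 - s) *
            stirling2 (n - 1) s := by
  obtain ⟨m, rfl⟩ : ∃ m, n = m + 1 := ⟨n - 1, (Nat.succ_pred_eq_of_pos hn).symm⟩
  have hρ1' : ρ - 1 ≠ 0 := sub_ne_zero.mpr hρ1
  set E : PowerSeries ℂ := PowerSeries.exp ℂ - 1 with hE
  set D : PowerSeries ℂ := ρ • PowerSeries.exp ℂ - 1 with hD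
  have hDconst : PowerSeries.constantCoeff D = ρ - 1 := by
    simp [hD, PowerSeries.constantCoeff_exp]
  have hDne : PowerSeries.constantCoeff D ≠ 0 := by rw [hDconst]; exact hρ1'
  set c : ℂ := ρ / (ρ - 1) with hc
  set x : PowerSeries ℂ := -(c • E) with hx
  have hXE : PowerSeries.X ∣ E := by
    rw [PowerSeries.X_dvd_iff]; simp [hE, PowerSeries.constantCoeff_exp]
  have hXx : PowerSeries.X ∣ x := by
    rw [hx, PowerSeries.smul_eq_C_mul, dvd_neg]
    exact hXE.mul_left _
  set G : PowerSeries ℂ := (ρ - 1)⁻¹ • ∑ s ∈ Finset.range (m + 1), x ^ s with hG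
  -- factor D
  have hmul : (ρ - 1) * c = ρ := by rw [hc]; field_simp
  have hDfac : D = (ρ - 1) • (1 - x) := by
    rw [hD, hx, hE, PowerSeries.smul_eq_C_mul, PowerSeries.smul_eq_C_mul,
      PowerSeries.smul_eq_C_mul, sub_neg_eq_add, mul_add, mul_one, ← mul_assoc,
      ← map_mul, hmul, map_sub, map_one]
    ring
  have hDG : D * G = 1 - x ^ (m + 1) := by
    rw [hDfac, hG, smul_mul_smul_comm, mul_inv_cancel₀ hρ1', one_smul]
    exact mul_neg_geom_sum x (m + 1)
  have hinv : D⁻¹ = G + D⁻¹ * x ^ (m + 1) := by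
    calc D⁻¹ = D⁻¹ * (D * G + x ^ (m + 1)) := by rw [hDG]; ring_nf
    _ = (D⁻¹ * D) * G + D⁻¹ * x ^ (m + 1) := by ring
    _ = G + D⁻¹ * x ^ (m + 1) := by rw [PowerSeries.inv_mul_cancel D hDne, one_mul]
  have htail : PowerSeries.coeff m (D⁻¹ * x ^ (m + 1)) = 0 := by
    have : (PowerSeries.X : PowerSeries ℂ) ^ (m + 1) ∣ D⁻¹ * x ^ (m + 1) :=
      Dvd.dvd.mul_left (pow_dvd_pow_of_dvd hXx (m + 1)) D⁻¹
    exact PowerSeries.X_pow_dvd_iff.mp this m (Nat.lt_succ_self m)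
  have hcoeffD : PowerSeries.coeff m D⁻¹ =
      (ρ - 1)⁻¹ * ∑ s ∈ Finset.range (m + 1),
        (-c) ^ s * PowerSeries.coeff m (E ^ s) := by
    rw [hinv, map_add, htail, add_zero, hG, map_smul, map_sum, smul_eq_mul]
    congr 1
    refine Finset.sum_congr rfl fun s _ => ?_
    rw [hx, ← neg_smul, smul_pow, map_smul, smul_eq_mul]
  have hAB : apostolBernoulliNum (m + 1) ρ =
      ((m + 1)! : ℂ) * PowerSeries.coeff m D⁻¹ := by
    rw [apostolBernoulliNum, PowerSeries.coeff_succ_X_mul]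
  have hEco : ∀ s, PowerSeries.coeff m (E ^ s) =
      stirling2 m s * (s ! : ℂ) / (m ! : ℂ) := by
    intro s
    rw [stirling2]
    have hs : (s ! : ℂ) ≠ 0 := Nat.cast_ne_zero.mpr (Nat.factorial_ne_zero s)
    have hm : (m ! : ℂ) ≠ 0 := Nat.cast_ne_zero.mpr (Nat.factorial_ne_zero m)
    field_simp
    rfl
  rw [hAB, hcoeffD]
  simp only [Nat.add_sub_cancel]
  rw [Finset.mul_sum, Finset.mul_sum, Finset.mul_sum]
  refine Finset.sum_congr rfl fun s hs => ?_
  have hsm : s ≤ m := Nat.lt_succ_iff.mp (Finset.mem_range.mp hs)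
  rw [hEco s]
  have hzpow : ρ ^ ((s : ℤ) - 1) = ρ ^ s / ρ := by
    rw [zpow_sub₀ hρ0, zpow_natCast, zpow_one]
  have hpowsub : (ρ - 1) ^ (m - s) = (ρ - 1) ^ m / (ρ - 1) ^ s := by
    rw [eq_div_iff (pow_ne_zero s hρ1'), ← pow_add, Nat.sub_add_cancel hsm]
  rw [hzpow, hpowsub, hc]
  have hs' : (s ! : ℂ) ≠ 0 := Nat.cast_ne_zero.mpr (Nat.factorial_ne_zero s)
  have hm' : (m ! : ℂ) ≠ 0 := Nat.cast_ne_zero.mpr (Nat.factorial_ne_zero m)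
  have hfact : ((m + 1)! : ℂ) = ((m : ℂ) + 1) * (m ! : ℂ) := by
    rw [Nat.factorial_succ]; push_cast; ring
  rw [hfact, ← neg_div, div_pow, neg_pow]
  push_cast
  field_simp
  ring
end

section
/- Let m be an integer with m ≥ 2 and let ρ be a complex number with ρ ≠ 1. Then the Apostol-Bernoulli polynomial satisfies 𝓑_m(ω;ρ) = (m/(ρ−1)) · ( ω^{m−1} + Σ_{n=1}^{m−1} (ρ/(1−ρ))^n · n! · S_n^{m−1}(ω) ), where S_n^{m−1}(ω) is the array polynomial. -/
open Finset Nat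

/-- The Apostol-Bernoulli polynomials `𝓑_n(ω;ρ)`, defined by the generating function
`t e^{ωt} / (ρ e^t - 1) = Σ_{n≥0} 𝓑_n(ω;ρ) t^n / n!` (as a formal power series). -/
noncomputable def apostolBernoulliPoly (n : ℕ) (ω ρ : ℂ) : ℂ :=
  (n ! : ℂ) * PowerSeries.coeff n
    (PowerSeries.X * PowerSeries.rescale ω (PowerSeries.exp ℂ) *
      (ρ • PowerSeries.exp ℂ - 1)⁻¹)

/-- The array polynomials `S_c^n(ω) = (1/c!) Σ_{j=0}^c (−1)^{c−j} C(c,j) (ω+j)^n`,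
equivalently defined by `e^{tω}(e^t − 1)^c = Σ_{n≥0} c! S_c^n(ω) t^n/n!`. -/
noncomputable def arrayPoly (c n : ℕ) (ω : ℂ) : ℂ :=
  (1 / (c ! : ℂ)) *
    ∑ j ∈ Finset.range (c + 1), (-1 : ℂ) ^ (c - j) * (c.choose j : ℂ) * (ω + j) ^ n

lemma coeff_rescale_mul_expsub_pow (ω : ℂ) (n k : ℕ) :
    PowerSeries.coeff k
      (PowerSeries.rescale ω (PowerSeries.exp ℂ) * (PowerSeries.exp ℂ - 1) ^ n) =
    (∑ j ∈ Finset.range (n + 1),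
      (-1 : ℂ) ^ (n - j) * (n.choose j : ℂ) * (ω + j) ^ k) / (k ! : ℂ) := by
  rw [sub_pow, Finset.mul_sum, map_sum, Finset.sum_div]
  refine Finset.sum_congr rfl fun j hj => ?_
  rw [Finset.mem_range] at hj
  have hterm : PowerSeries.rescale ω (PowerSeries.exp ℂ) *
      ((-1 : PowerSeries ℂ) ^ (j + n) * (PowerSeries.exp ℂ) ^ j * (1 : PowerSeries ℂ) ^ (n - j) *
        ((n.choose j : ℕ) : PowerSeries ℂ)) =
      PowerSeries.C ((-1 : ℂ) ^ (j + n) * (n.choose j : ℂ)) *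
        PowerSeries.rescale (ω + (j : ℂ)) (PowerSeries.exp ℂ) := by
    rw [PowerSeries.exp_pow_eq_rescale_exp, ← PowerSeries.exp_mul_exp_eq_exp_add ω (j : ℂ),
      map_mul]
    have h1 : ((-1 : PowerSeries ℂ)) = PowerSeries.C (-1) := by simp
    have h2 : (((n.choose j : ℕ) : PowerSeries ℂ)) = PowerSeries.C ((n.choose j : ℕ) : ℂ) := by
      simp
    rw [h1, h2, ← map_pow]
    ring
  rw [hterm, PowerSeries.coeff_C_mul, PowerSeries.coeff_rescale, PowerSeries.coeff_exp]
  have hq : (algebraMap ℚ ℂ) (1 / (k ! : ℚ)) = 1 / (k ! : ℂ) := by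
    push_cast
    simp
  have hpar : (-1 : ℂ) ^ (j + n) = (-1 : ℂ) ^ (n - j) := by
    have h : j + n = (n - j) + 2 * j := by omega
    rw [h, pow_add, pow_mul]
    simp
  rw [hq, hpar]
  ring

theorem stmt1 (m : ℕ) (hm : 2 ≤ m) (ρ : ℂ) (hρ : ρ ≠ 1) (ω : ℂ) :
    apostolBernoulliPoly m ω ρ =
      ((m : ℂ) / (ρ - 1)) *
        (ω ^ (m - 1) +
          ∑ n ∈ Finset.Icc 1 (m - 1),
            (ρ / (1 - ρ)) ^ n * (n ! : ℂ) * arrayPoly n (m - 1) ω) := by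
  have h1ρ : (1 : ℂ) - ρ ≠ 0 := sub_ne_zero.mpr (Ne.symm hρ)
  have hρ1 : ρ - 1 ≠ 0 := sub_ne_zero.mpr hρ
  set q : ℂ := ρ / (1 - ρ) with hq
  set E : PowerSeries ℂ := PowerSeries.exp ℂ - 1 with hE
  set x : PowerSeries ℂ := PowerSeries.C q * E with hx
  set R : PowerSeries ℂ := PowerSeries.rescale ω (PowerSeries.exp ℂ) with hR
  set Inv : PowerSeries ℂ := (ρ • PowerSeries.exp ℂ - 1)⁻¹ with hInvdef
  set F : PowerSeries ℂ := ∑ n ∈ Finset.range m, x ^ n with hF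
  -- factorization ρ e^t - 1 = (ρ-1)(1 - x)
  have hconst : (ρ - 1) * q = -ρ := by
    rw [hq, mul_div_assoc', div_eq_iff h1ρ]
    ring
  have hfac : ρ • PowerSeries.exp ℂ - 1 = PowerSeries.C (ρ - 1) * (1 - x) := by
    rw [PowerSeries.smul_eq_C_mul, hx, hE]
    have hCq : PowerSeries.C (ρ - 1) * PowerSeries.C q = - PowerSeries.C ρ := by
      rw [← map_mul, hconst, map_neg]
    have h1 : PowerSeries.C (ρ - 1) = PowerSeries.C ρ - 1 := by
      rw [map_sub, map_one]
    rw [h1] at hCq ⊢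
    linear_combination (PowerSeries.exp ℂ - 1) * hCq
  have hgeom : (1 - x) * F = 1 - x ^ m := by
    rw [hF]
    linear_combination - geom_sum_mul x m
  have hmul : (ρ • PowerSeries.exp ℂ - 1) * Inv = 1 := by
    refine PowerSeries.mul_inv_cancel _ ?_
    rw [PowerSeries.smul_eq_C_mul]
    simp only [map_sub, map_mul, PowerSeries.constantCoeff_C, PowerSeries.constantCoeff_exp,
      map_one, mul_one]
    exact hρ1
  have h2 : (ρ • PowerSeries.exp ℂ - 1) * (PowerSeries.C (ρ - 1)⁻¹ * F) = 1 - x ^ m := by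
    rw [hfac]
    have : PowerSeries.C (ρ - 1) * PowerSeries.C (ρ - 1)⁻¹ = 1 := by
      rw [← map_mul, mul_inv_cancel₀ hρ1, map_one]
    calc PowerSeries.C (ρ - 1) * (1 - x) * (PowerSeries.C (ρ - 1)⁻¹ * F)
        = (PowerSeries.C (ρ - 1) * PowerSeries.C (ρ - 1)⁻¹) * ((1 - x) * F) := by ring
      _ = 1 - x ^ m := by rw [this, hgeom, one_mul]
  have hInv : Inv = PowerSeries.C (ρ - 1)⁻¹ * F + x ^ m * Inv := by
    linear_combination (PowerSeries.C (ρ - 1)⁻¹ * F) * hmul - Inv * h2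
  set k := m - 1 with hk
  have hmk : m = k + 1 := by omega
  -- the vanishing of the high-order term
  have hvanish : PowerSeries.coeff k (R * (x ^ m * Inv)) = 0 := by
    have hXdvd : (PowerSeries.X : PowerSeries ℂ) ∣ E := by
      rw [PowerSeries.X_dvd_iff, hE]
      simp [PowerSeries.constantCoeff_exp]
    have : (PowerSeries.X : PowerSeries ℂ) ^ m ∣ R * (x ^ m * Inv) := by
      obtain ⟨D, hD⟩ := hXdvd
      exact ⟨(PowerSeries.C q) ^ m * D ^ m * R * Inv, by rw [hx, hD]; ring⟩
    exact PowerSeries.X_pow_dvd_iff.mp this k (by omega)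
  -- compute the main coefficient
  have hcoeff : PowerSeries.coeff m
      (PowerSeries.X * R * (ρ • PowerSeries.exp ℂ - 1)⁻¹) =
      (ρ - 1)⁻¹ * ∑ n ∈ Finset.range m,
        q ^ n * ((∑ j ∈ Finset.range (n + 1),
          (-1 : ℂ) ^ (n - j) * (n.choose j : ℂ) * (ω + j) ^ k) / (k ! : ℂ)) := by
    rw [mul_assoc, hmk, PowerSeries.coeff_succ_X_mul, ← hInvdef, hInv, mul_add, map_add,
      hvanish, add_zero, hF, Finset.mul_sum, Finset.mul_sum, map_sum, Finset.mul_sum]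
    refine Finset.sum_congr (by rw [hmk]) fun n _ => ?_
    have : R * (PowerSeries.C (ρ - 1)⁻¹ * x ^ n) =
        PowerSeries.C ((ρ - 1)⁻¹ * q ^ n) * (R * E ^ n) := by
      rw [hx, mul_pow, ← map_pow, map_mul]
      ring
    rw [this, PowerSeries.coeff_C_mul, hR, coeff_rescale_mul_expsub_pow]
    ring
  -- relate inner sums to arrayPoly
  have hsum : ∀ n : ℕ, (∑ j ∈ Finset.range (n + 1),
      (-1 : ℂ) ^ (n - j) * (n.choose j : ℂ) * (ω + j) ^ k) = (n ! : ℂ) * arrayPoly n k ω := by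
    intro n
    rw [arrayPoly]
    have : (n ! : ℂ) ≠ 0 := Nat.cast_ne_zero.mpr n.factorial_ne_zero
    field_simp
  have harr0 : arrayPoly 0 k ω = ω ^ k := by
    simp [arrayPoly]
  -- split off the n = 0 term
  set S : ℂ := ∑ i ∈ Finset.range k, q ^ (i + 1) * ((i + 1)! : ℂ) * arrayPoly (i + 1) k ω
    with hS
  have hL : ∑ n ∈ Finset.range m, q ^ n * ((n ! : ℂ) * arrayPoly n k ω / (k ! : ℂ)) =
      (ω ^ k + S) / (k ! : ℂ) := by
    have hterm : ∀ n : ℕ, q ^ n * ((n ! : ℂ) * arrayPoly n k ω / (k ! : ℂ)) =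
        q ^ n * (n ! : ℂ) * arrayPoly n k ω / (k ! : ℂ) := fun n => by ring
    simp only [hterm, ← Finset.sum_div]
    rw [hmk, Finset.sum_range_succ', harr0, hS]
    congr 1
    rw [add_comm]
    congr 1
    simp
  have hR2 : ∑ n ∈ Finset.Icc 1 k, q ^ n * (n ! : ℂ) * arrayPoly n k ω = S := by
    rw [← Finset.Ico_add_one_right_eq_Icc, Finset.sum_Ico_eq_sum_range, hS]
    exact Finset.sum_congr (by norm_num) fun i _ => by rw [add_comm 1 i]
  have hkfac : (m ! : ℂ) = (m : ℂ) * (k ! : ℂ) := by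
    rw [hmk]
    push_cast [Nat.factorial_succ]
    ring
  have hkne : (k ! : ℂ) ≠ 0 := Nat.cast_ne_zero.mpr k.factorial_ne_zero
  rw [apostolBernoulliPoly, hcoeff]
  simp only [hsum]
  rw [hL, hR2, hkfac]
  field_simp
end

section
/- Let m be an integer with m ≥ 2 and let ρ be a complex number with ρ ≠ 1. Then the Apostol-Bernoulli polynomial satisfies 𝓑_m(ω;ρ) = (m/(ρ−1)) · ( ω^{m−1} + Σ_{v=0}^{m−1} C(m−1,v) · ω^{m−v−1} · Σ_{n=1}^{v} (ρ/(1−ρ))^n · n! · S₂(v,n) ). -/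
open Finset Nat

theorem stmt2 (m : ℕ) (hm : 2 ≤ m) (ρ : ℂ) (hρ : ρ ≠ 1) (ω : ℂ) :
    apostolBernoulliPoly m ω ρ =
      ((m : ℂ) / (ρ - 1)) *
        (ω ^ (m - 1) +
          ∑ v ∈ Finset.range m, ((m - 1).choose v : ℂ) * ω ^ (m - v - 1) *
            ∑ n ∈ Finset.Icc 1 v, (ρ / (1 - ρ)) ^ n * (n ! : ℂ) * stirling2 v n) := by
  classical
  have hρ1 : ρ - 1 ≠ 0 := sub_ne_zero.mpr hρ
  have h1ρ : (1 : ℂ) - ρ ≠ 0 := sub_ne_zero.mpr (Ne.symm hρ)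
  set E : PowerSeries ℂ := PowerSeries.exp ℂ - 1 with hE
  set c : ℂ := ρ / (1 - ρ) with hc
  set u : PowerSeries ℂ := c • E with hu
  set B : PowerSeries ℂ := ρ • PowerSeries.exp ℂ - 1 with hB
  set G : PowerSeries ℂ := ∑ n ∈ Finset.range (m + 1), u ^ n with hG
  have hBc : PowerSeries.constantCoeff B = ρ - 1 := by
    simp [hB, PowerSeries.constantCoeff_exp, smul_eq_mul]
  have hXE : (PowerSeries.X : PowerSeries ℂ) ∣ E := by
    rw [PowerSeries.X_dvd_iff]
    simp [hE, PowerSeries.constantCoeff_exp]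
  have hXu : (PowerSeries.X : PowerSeries ℂ) ∣ u := by
    rw [PowerSeries.X_dvd_iff]
    rcases hXE with ⟨f, hf⟩
    simp [hu, hf, smul_eq_mul]
  have hEvan : ∀ v n : ℕ, v < n → PowerSeries.coeff v (E ^ n) = 0 := by
    intro v n hvn
    exact PowerSeries.X_pow_dvd_iff.mp (pow_dvd_pow_of_dvd hXE n) v hvn
  have hBform : B = (ρ - 1) • ((1 : PowerSeries ℂ) - u) := by
    have hcc : (ρ - 1) * c = -ρ := by
      rw [hc]; field_simp; ring
    rw [hB, hu, hE, smul_sub, smul_smul, hcc]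
    module
  have hBinv : B * B⁻¹ = 1 :=
    PowerSeries.mul_inv_cancel _ (by rw [hBc]; exact hρ1)
  have hB0 : B ≠ 0 := by
    intro h
    rw [h, map_zero] at hBc
    exact hρ1 hBc.symm
  have hgeom : ((1 : PowerSeries ℂ) - u) * G = 1 - u ^ (m + 1) := by
    have h := geom_sum_mul u (m + 1)
    rw [hG]; linear_combination -h
  have hkey : B⁻¹ = (ρ - 1)⁻¹ • G + u ^ (m + 1) * B⁻¹ := by
    apply mul_left_cancel₀ hB0
    rw [hBinv, mul_add, mul_smul_comm, hBform, smul_mul_assoc, hgeom, smul_smul,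
      inv_mul_cancel₀ hρ1, one_smul, ← hBform, mul_left_comm, hBinv, mul_one,
      sub_add_cancel]
  -- coefficient extraction
  have hvan : PowerSeries.coeff m
      (PowerSeries.X * PowerSeries.rescale ω (PowerSeries.exp ℂ) * (u ^ (m + 1) * B⁻¹)) = 0 := by
    have hd : (PowerSeries.X : PowerSeries ℂ) ^ (m + 1) ∣
        PowerSeries.X * PowerSeries.rescale ω (PowerSeries.exp ℂ) * (u ^ (m + 1) * B⁻¹) :=
      Dvd.dvd.mul_left (Dvd.dvd.mul_right (pow_dvd_pow_of_dvd hXu (m + 1)) _) _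
    exact PowerSeries.X_pow_dvd_iff.mp hd m (Nat.lt_succ_self m)
  have hm1 : m - 1 + 1 = m := by omega
  -- the inner truncated sums
  set T : ℕ → ℂ := fun v => ∑ n ∈ Finset.Icc 1 v, c ^ n * PowerSeries.coeff v (E ^ n) with hT
  have hGv : ∀ v, v < m → PowerSeries.coeff v G = (if v = 0 then 1 else 0) + T v := by
    intro v hv
    rw [hG, map_sum]
    have hcoef : ∀ n : ℕ, PowerSeries.coeff v (u ^ n) = c ^ n * PowerSeries.coeff v (E ^ n) := by
      intro n
      rw [hu, smul_pow, map_smul, smul_eq_mul]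
    simp_rw [hcoef]
    rw [Finset.sum_range_succ' (fun n => c ^ n * PowerSeries.coeff v (E ^ n)) m]
    have h0 : c ^ 0 * PowerSeries.coeff v (E ^ 0) = if v = 0 then 1 else 0 := by
      simp [PowerSeries.coeff_one]
    have hrest : ∑ i ∈ Finset.range m, c ^ (i + 1) * PowerSeries.coeff v (E ^ (i + 1)) =
        ∑ n ∈ Finset.Icc 1 v, c ^ n * PowerSeries.coeff v (E ^ n) := by
      have hsub : ∑ i ∈ Finset.range m, c ^ (i + 1) * PowerSeries.coeff v (E ^ (i + 1)) =
          ∑ i ∈ Finset.range v, c ^ (i + 1) * PowerSeries.coeff v (E ^ (i + 1)) := by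
        symm
        apply Finset.sum_subset
        · intro i hi
          simp only [Finset.mem_range] at hi ⊢
          omega
        · intro i _ hi
          simp only [Finset.mem_range, not_lt] at hi
          rw [hEvan v (i + 1) (by omega), mul_zero]
      rw [hsub]
      have hIcc : Finset.Icc 1 v = Finset.Ico 1 (v + 1) := by
        rw [Finset.Ico_add_one_right_eq_Icc]
      rw [hIcc, Finset.sum_Ico_eq_sum_range]
      simp only [Nat.add_sub_cancel]
      apply Finset.sum_congr rfl
      intro i _
      rw [add_comm 1 i]
    rw [h0, hrest]
    exact add_comm _ _
  -- relate stirling2 to coefficients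
  have hst : ∀ v n : ℕ, (n ! : ℂ) * stirling2 v n = (v ! : ℂ) * PowerSeries.coeff v (E ^ n) := by
    intro v n
    have hn : (n ! : ℂ) ≠ 0 := Nat.cast_ne_zero.mpr n.factorial_ne_zero
    rw [stirling2, ← hE]
    field_simp
  -- compute the left-hand side
  have hterm : ∀ v ∈ Finset.range m,
      PowerSeries.coeff v G * PowerSeries.coeff (m - 1 - v)
          (PowerSeries.rescale ω (PowerSeries.exp ℂ)) =
        ((if v = 0 then 1 else 0) + T v) * (ω ^ (m - 1 - v) * ((m - 1 - v)! : ℂ)⁻¹) := by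
    intro v hv
    rw [Finset.mem_range] at hv
    rw [hGv v hv, PowerSeries.coeff_rescale, PowerSeries.coeff_exp]
    push_cast
    simp [one_div]
  have hmain : PowerSeries.coeff (m - 1)
      (G * PowerSeries.rescale ω (PowerSeries.exp ℂ)) =
      ∑ v ∈ Finset.range m,
        ((if v = 0 then 1 else 0) + T v) * (ω ^ (m - 1 - v) * ((m - 1 - v)! : ℂ)⁻¹) := by
    rw [PowerSeries.coeff_mul, Finset.Nat.sum_antidiagonal_eq_sum_range_succ_mk,
      (by omega : (m - 1).succ = m)]
    exact Finset.sum_congr rfl hterm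
  have hXG : PowerSeries.coeff m
      (PowerSeries.X * PowerSeries.rescale ω (PowerSeries.exp ℂ) * G) =
      ∑ v ∈ Finset.range m,
        ((if v = 0 then 1 else 0) + T v) * (ω ^ (m - 1 - v) * ((m - 1 - v)! : ℂ)⁻¹) := by
    rw [mul_assoc]
    conv_lhs => rw [← hm1]
    rw [PowerSeries.coeff_succ_X_mul,
      mul_comm (PowerSeries.rescale ω (PowerSeries.exp ℂ)) G, hmain]
  rw [apostolBernoulliPoly, ← hB, hkey, mul_add, map_add, hvan, add_zero,
    mul_smul_comm, map_smul, smul_eq_mul, hXG]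
  -- expand the inner sums on the RHS
  have hRHS : ∀ v ∈ Finset.range m,
      ((m - 1).choose v : ℂ) * ω ^ (m - v - 1) *
          ∑ n ∈ Finset.Icc 1 v, c ^ n * (n ! : ℂ) * stirling2 v n =
        ((m - 1).choose v : ℂ) * ω ^ (m - 1 - v) * ((v ! : ℂ) * T v) := by
    intro v hv
    have h1 : m - v - 1 = m - 1 - v := by omega
    rw [h1]
    congr 1
    show _ = (v ! : ℂ) * ∑ n ∈ Finset.Icc 1 v, c ^ n * PowerSeries.coeff v (E ^ n)
    rw [Finset.mul_sum]
    apply Finset.sum_congr rfl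
    intro n _
    rw [mul_assoc, hst v n]
    ring
  rw [Finset.sum_congr rfl hRHS]
  -- split off the delta part on the left
  simp_rw [add_mul]
  rw [Finset.sum_add_distrib]
  have hδ : ∑ v ∈ Finset.range m,
      (if v = 0 then (1 : ℂ) else 0) * (ω ^ (m - 1 - v) * ((m - 1 - v)! : ℂ)⁻¹) =
      ω ^ (m - 1) * (((m - 1)! : ℂ))⁻¹ := by
    rw [Finset.sum_eq_single 0]
    · simp
    · intro b _ hb; simp [hb]
    · intro h
      rw [Finset.mem_range] at h
      omega
  rw [hδ]
  -- final scalar bookkeeping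
  have hmfact : (m ! : ℂ) = (m : ℂ) * ((m - 1)! : ℂ) := by
    rw [← Nat.cast_mul, Nat.mul_factorial_pred (by omega)]
  have hfact1 : ((m - 1)! : ℂ) ≠ 0 := Nat.cast_ne_zero.mpr (m - 1).factorial_ne_zero
  rw [mul_add (ρ - 1)⁻¹, mul_add (m ! : ℂ), mul_add ((m : ℂ) / (ρ - 1)),
    Finset.mul_sum _ _ (ρ - 1)⁻¹, Finset.mul_sum _ _ (m ! : ℂ),
    Finset.mul_sum _ _ ((m : ℂ) / (ρ - 1))]
  congr 1
  · rw [hmfact]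
    field_simp
  · apply Finset.sum_congr rfl
    intro v hv
    rw [Finset.mem_range] at hv
    have hch : ((m - 1).choose v * v ! * (m - 1 - v)! : ℂ) = ((m - 1)! : ℂ) := by
      exact_mod_cast congrArg (Nat.cast : ℕ → ℂ)
        (Nat.choose_mul_factorial_mul_factorial (by omega : v ≤ m - 1))
    have hfv : ((m - 1 - v)! : ℂ) ≠ 0 := Nat.cast_ne_zero.mpr (m - 1 - v).factorial_ne_zero
    rw [hmfact]
    field_simp
    linear_combination (-((m : ℂ) * T v * ω ^ (m - 1 - v))) * hch
end

section
/- Let m be a positive integer and let ρ be a complex number with ρ ≠ 1. Then the Eulerian polynomial satisfies A_m(ρ) = Σ_{n=1}^{m} (ρ/(1−ρ))^n · n! · (1−ρ)^m · S₂(m,n). -/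
open Finset Nat

/-- The Eulerian numbers `A_{n,j} = Σ_{v=0}^j (−1)^v C(n+1,v) (j−v)^n`. -/
noncomputable def eulerianNumber (n j : ℕ) : ℂ :=
  ∑ v ∈ Finset.range (j + 1), (-1 : ℂ) ^ v * ((n + 1).choose v : ℂ) * ((j : ℂ) - v) ^ n

/-- The Eulerian polynomials `A_n(ρ) = Σ_{j=0}^n A_{n,j} ρ^j`. -/
noncomputable def eulerianPoly (n : ℕ) (ρ : ℂ) : ℂ :=
  ∑ j ∈ Finset.range (n + 1), eulerianNumber n j * ρ ^ j

/-- Triangular sum reindexing. -/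
lemma tri (M : ℕ) (F : ℕ → ℕ → ℂ) :
    ∑ j ∈ range (M+1), ∑ i ∈ range (j+1), F i j
      = ∑ i ∈ range (M+1), ∑ v ∈ range (M+1-i), F i (i+v) := by
  induction M with
  | zero => simp
  | succ M ih =>
    rw [Finset.sum_range_succ, ih]
    have h1 : ∀ i ∈ range (M+2), ∑ v ∈ range (M+2-i), F i (i+v)
        = (∑ v ∈ range (M+1-i), F i (i+v)) + F i (M+1) := by
      intro i hi
      have hi' : i ≤ M+1 := by simpa [Nat.lt_succ_iff] using hi
      have h2 : M+2-i = (M+1-i)+1 := by omega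
      rw [h2, Finset.sum_range_succ]
      congr 2
      omega
    rw [Finset.sum_congr rfl h1, Finset.sum_add_distrib]
    congr 1
    conv_rhs => rw [Finset.sum_range_succ]
    simp only [Nat.sub_self, Finset.range_zero, Finset.sum_empty, add_zero]

/-- Vandermonde-type convolution. -/
lemma vand (q : ℕ) : ∀ s i : ℕ,
    ∑ t ∈ range (s+1), (i+t).choose i * ((q + (s-t)).choose q)
      = (i+q+s+1).choose (i+q+1) := by
  induction q with
  | zero =>
    intro s i
    have h := Nat.sum_range_add_choose s i
    simp only [Nat.choose_zero_right, Nat.zero_add, mul_one]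
    calc ∑ t ∈ range (s+1), (i+t).choose i = ∑ t ∈ range (s+1), (t+i).choose i := by
          refine Finset.sum_congr rfl fun t _ => by rw [Nat.add_comm]
      _ = (s+i+1).choose (i+1) := h
      _ = (i+0+s+1).choose (i+0+1) := by congr 1 <;> omega
  | succ q ihq =>
    intro s
    induction s with
    | zero =>
      intro i
      simp [Nat.choose_self]
    | succ s ihs =>
      intro i
      rw [Finset.sum_range_succ]
      simp only [Nat.sub_self, Nat.add_zero, Nat.choose_self, mul_one]
      have hpas : ∀ t ∈ range (s+1),
          (i+t).choose i * ((q+1 + (s+1-t)).choose (q+1))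
            = (i+t).choose i * ((q+1 + (s-t)).choose (q+1))
              + (i+t).choose i * ((q + (s+1-t)).choose q) := by
        intro t ht
        have ht' : t ≤ s := by simpa [Nat.lt_succ_iff] using ht
        have e1 : q+1 + (s+1-t) = (q+1+(s-t)) + 1 := by omega
        have e2 : q + (s+1-t) = q+1+(s-t) := by omega
        rw [e1, e2]
        rw [show (q+1+(s-t))+1 = (q+(s-t)+1)+1 by omega,
            Nat.choose_succ_succ (q+(s-t)+1) q]
        rw [show q+(s-t)+1 = q+1+(s-t) by omega]
        ring
      rw [Finset.sum_congr rfl hpas, Finset.sum_add_distrib, add_assoc]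
      have hA : ∑ t ∈ range (s+1), (i+t).choose i * ((q+1 + (s-t)).choose (q+1))
          = (i+(q+1)+s+1).choose (i+(q+1)+1) := ihs i
      have hB : (∑ t ∈ range (s+1), (i+t).choose i * ((q + (s+1-t)).choose q))
            + (i+(s+1)).choose i = (i+q+(s+1)+1).choose (i+q+1) := by
        have h := ihq (s+1) i
        rw [Finset.sum_range_succ] at h
        simpa using h
      rw [hA, hB]
      rw [show i+(q+1)+s+1 = i+q+s+2 by omega, show i+(q+1)+1 = (i+q+1)+1 by omega,
          show i+q+(s+1)+1 = i+q+s+2 by omega,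
          show i+(q+1)+(s+1)+1 = (i+q+s+2)+1 by omega,
          Nat.choose_succ_succ (i+q+s+2) (i+q+1)]
      exact add_comm _ _

lemma factorial_mul_stirling2 (m c : ℕ) :
    (c ! : ℂ) * stirling2 m c
      = ∑ v ∈ range (c+1), (-1:ℂ)^(c-v) * (c.choose v : ℂ) * (v:ℂ)^m := by
  have hcoeff : PowerSeries.coeff m ((PowerSeries.exp ℂ - 1) ^ c)
      = ∑ v ∈ range (c+1), (-1:ℂ)^(c-v) * (c.choose v : ℂ) * (v:ℂ)^m / (m ! : ℂ) := by
    rw [sub_eq_add_neg, add_pow]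
    rw [map_sum]
    refine Finset.sum_congr rfl fun v hv => ?_
    rw [PowerSeries.exp_pow_eq_rescale_exp]
    have : (-1 : PowerSeries ℂ) ^ (c - v) * (c.choose v : PowerSeries ℂ)
        = PowerSeries.C ((-1:ℂ)^(c-v) * (c.choose v : ℂ)) := by
      simp [map_mul, map_pow]
    rw [mul_assoc, this, mul_comm, PowerSeries.coeff_C_mul, PowerSeries.coeff_rescale,
        PowerSeries.coeff_exp]
    simp only [map_div₀, map_one, map_natCast]
    ring
  rw [stirling2, hcoeff, ← Finset.sum_div]
  have hm : (m ! : ℂ) ≠ 0 := Nat.cast_ne_zero.mpr (Nat.factorial_ne_zero m)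
  have hc : (c ! : ℂ) ≠ 0 := Nat.cast_ne_zero.mpr (Nat.factorial_ne_zero c)
  field_simp

theorem stmt5 (m : ℕ) (hm : 0 < m) (ρ : ℂ) (hρ : ρ ≠ 1) :
    eulerianPoly m ρ =
      ∑ n ∈ Finset.Icc 1 m, (ρ / (1 - ρ)) ^ n * (n ! : ℂ) * (1 - ρ) ^ m * stirling2 m n := by
  have h1 : (1:ℂ) - ρ ≠ 0 := sub_ne_zero.mpr (Ne.symm hρ)
  -- Step 1: rewrite each RHS term using the explicit Stirling formula
  have key : ∀ n ∈ Finset.Icc 1 m,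
      (ρ / (1 - ρ)) ^ n * (n ! : ℂ) * (1 - ρ) ^ m * stirling2 m n
        = ρ^n * (1-ρ)^(m-n) * ∑ v ∈ range (n+1), (-1:ℂ)^(n-v) * (n.choose v : ℂ) * (v:ℂ)^m := by
    intro n hn
    have hn' : n ≤ m := (Finset.mem_Icc.mp hn).2
    have h3 : ((1:ℂ)-ρ)^m = (1-ρ)^n * (1-ρ)^(m-n) := by rw [← pow_add]; congr 1; omega
    rw [← factorial_mul_stirling2 m n, div_pow, h3]
    field_simp
  rw [Finset.sum_congr rfl key]
  -- Step 2: extend the sum to range (m+1): the n = 0 term vanishes since m > 0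
  have hrange : Finset.range (m+1) = insert 0 (Finset.Icc 1 m) := by
    ext x; simp [Nat.lt_succ_iff]; omega
  have hext : ∑ n ∈ Finset.Icc 1 m,
        (ρ^n * (1-ρ)^(m-n) * ∑ v ∈ range (n+1), (-1:ℂ)^(n-v) * (n.choose v : ℂ) * (v:ℂ)^m)
      = ∑ n ∈ range (m+1),
        (ρ^n * (1-ρ)^(m-n) * ∑ v ∈ range (n+1), (-1:ℂ)^(n-v) * (n.choose v : ℂ) * (v:ℂ)^m) := by
    rw [hrange, Finset.sum_insert (by simp)]
    simp [zero_pow hm.ne']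
  rw [hext]
  -- Step 3: LHS to the common double-sum form
  have lhs_eq : eulerianPoly m ρ
      = ∑ i ∈ range (m+1), ∑ v ∈ range (m+1-i),
          (-1:ℂ)^v * ((m+1).choose v : ℂ) * (i:ℂ)^m * ρ^(i+v) := by
    rw [eulerianPoly]
    have step1 : ∀ j ∈ range (m+1),
        eulerianNumber m j * ρ^j
          = ∑ i ∈ range (j+1), (-1:ℂ)^(j-i) * ((m+1).choose (j-i) : ℂ) * (i:ℂ)^m * ρ^j := by
      intro j hj
      rw [eulerianNumber, Finset.sum_mul, ← Finset.sum_range_reflect]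
      refine Finset.sum_congr rfl fun i hi => ?_
      have hij : i ≤ j := by simpa [Nat.lt_succ_iff] using hi
      rw [show j+1-1-i = j-i by omega]
      have hc : ((j:ℂ) - ((j - i : ℕ):ℂ)) = (i:ℂ) := by
        rw [Nat.cast_sub hij]; ring
      rw [hc]
    rw [Finset.sum_congr rfl step1,
        tri m (fun i j => (-1:ℂ)^(j-i) * ((m+1).choose (j-i):ℂ) * (i:ℂ)^m * ρ^j)]
    refine Finset.sum_congr rfl fun i hi => Finset.sum_congr rfl fun v hv => ?_
    rw [Nat.add_sub_cancel_left]
  rw [lhs_eq]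
  -- Step 4: RHS to the common double-sum form
  have step1 : ∀ n ∈ range (m+1),
      ρ^n*(1-ρ)^(m-n) * ∑ v ∈ range (n+1), (-1:ℂ)^(n-v)*(n.choose v:ℂ)*(v:ℂ)^m
        = ∑ i ∈ range (n+1), (-1:ℂ)^(n-i)*(n.choose i:ℂ)*(i:ℂ)^m*ρ^n*(1-ρ)^(m-n) := by
    intro n _
    rw [Finset.mul_sum]
    exact Finset.sum_congr rfl fun i _ => by ring
  rw [Finset.sum_congr rfl step1,
      tri m (fun i n => (-1:ℂ)^(n-i)*(n.choose i:ℂ)*(i:ℂ)^m*ρ^n*(1-ρ)^(m-n))]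
  refine Finset.sum_congr rfl fun i hi => ?_
  have him : i ≤ m := by simpa [Nat.lt_succ_iff] using hi
  -- expand (1-ρ)^(m-i-t) binomially
  have step2 : ∀ t ∈ range (m+1-i),
      (-1:ℂ)^((i+t)-i)*((i+t).choose i:ℂ)*(i:ℂ)^m*ρ^(i+t)*(1-ρ)^(m-(i+t))
        = ∑ u ∈ range ((m-i)-t+1),
            ((-1:ℂ)^(t+u) * ((i+t).choose i:ℂ) * (((m-i)-t).choose u : ℂ)
              * (i:ℂ)^m * ρ^(i+(t+u))) := by
    intro t ht
    have htm : t ≤ m - i := by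
      have := Finset.mem_range.mp ht; omega
    rw [Nat.add_sub_cancel_left, show m-(i+t) = (m-i)-t by omega]
    rw [show ((1:ℂ)-ρ) = (-ρ + 1) by ring, add_pow, Finset.mul_sum]
    refine Finset.sum_congr rfl fun u hu => ?_
    rw [neg_pow ρ u, one_pow, pow_add (-1:ℂ) t u,
        show i+(t+u) = (i+t)+u by omega, pow_add ρ (i+t) u]
    ring
  rw [Finset.sum_congr rfl step2, show m+1-i = (m-i)+1 by omega]
  have htri := tri (m-i)
      (fun t j => (-1:ℂ)^j * ((i+t).choose i:ℂ) * (((m-i)-t).choose (j-t):ℂ)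
        * (i:ℂ)^m * ρ^(i+j))
  have hfix : ∀ t ∈ range ((m-i)+1), ∀ u ∈ range ((m-i)+1-t),
      ((-1:ℂ)^(t+u) * ((i+t).choose i:ℂ) * (((m-i)-t).choose ((t+u)-t):ℂ)
          * (i:ℂ)^m * ρ^(i+(t+u)))
        = ((-1:ℂ)^(t+u) * ((i+t).choose i:ℂ) * (((m-i)-t).choose u:ℂ)
          * (i:ℂ)^m * ρ^(i+(t+u))) := by
    intro t _ u _
    rw [Nat.add_sub_cancel_left]
  -- turn current sum into tri's RHS, then replace by tri's LHS
  have hcur : ∑ t ∈ range ((m-i)+1), ∑ u ∈ range ((m-i)+1-t),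
        ((-1:ℂ)^(t+u) * ((i+t).choose i:ℂ) * (((m-i)-t).choose u : ℂ)
          * (i:ℂ)^m * ρ^(i+(t+u)))
      = ∑ j ∈ range ((m-i)+1), ∑ t ∈ range (j+1),
        ((-1:ℂ)^j * ((i+t).choose i:ℂ) * (((m-i)-t).choose (j-t):ℂ)
          * (i:ℂ)^m * ρ^(i+j)) := by
    rw [htri]
    refine Finset.sum_congr rfl fun t _ => Finset.sum_congr rfl fun u _ => ?_
    rw [Nat.add_sub_cancel_left]
  have hranges : ∀ t ∈ range ((m-i)+1),
      ∑ u ∈ range ((m-i)-t+1),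
        ((-1:ℂ)^(t+u) * ((i+t).choose i:ℂ) * (((m-i)-t).choose u : ℂ)
          * (i:ℂ)^m * ρ^(i+(t+u)))
      = ∑ u ∈ range ((m-i)+1-t),
        ((-1:ℂ)^(t+u) * ((i+t).choose i:ℂ) * (((m-i)-t).choose u : ℂ)
          * (i:ℂ)^m * ρ^(i+(t+u))) := by
    intro t ht
    have h' := Finset.mem_range.mp ht
    rw [show (m-i)-t+1 = (m-i)+1-t by omega]
  rw [Finset.sum_congr rfl hranges, hcur]
  -- finally, collapse the inner sum with the Vandermonde identity
  refine Finset.sum_congr rfl fun v hv => ?_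
  symm
  have hvm : v ≤ m - i := by
    have := Finset.mem_range.mp hv; omega
  have hnat : ∑ t ∈ range (v+1), (i+t).choose i * (((m-i)-t).choose (v-t))
      = (m+1).choose v := by
    have h := vand ((m-i)-v) v i
    calc ∑ t ∈ range (v+1), (i+t).choose i * (((m-i)-t).choose (v-t))
        = ∑ t ∈ range (v+1), (i+t).choose i * ((((m-i)-v) + (v-t)).choose ((m-i)-v)) := by
          refine Finset.sum_congr rfl fun t ht => ?_
          have htv : t ≤ v := by simpa [Nat.lt_succ_iff] using ht
          rw [show ((m-i)-v) + (v-t) = (m-i)-t by omega]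
          have hsym : ((m-i)-t).choose (v-t) = ((m-i)-t).choose (((m-i)-t)-(v-t)) :=
            (Nat.choose_symm (by omega)).symm
          rw [hsym, show ((m-i)-t)-(v-t) = (m-i)-v by omega]
      _ = (i+((m-i)-v)+v+1).choose (i+((m-i)-v)+1) := h
      _ = (m+1).choose v := by
          rw [show i+((m-i)-v)+v+1 = m+1 by omega,
              show i+((m-i)-v)+1 = (m+1)-v by omega]
          exact Nat.choose_symm (by omega)
  calc ∑ t ∈ range (v+1),
        ((-1:ℂ)^v * ((i+t).choose i:ℂ) * (((m-i)-t).choose (v-t):ℂ)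
          * (i:ℂ)^m * ρ^(i+v))
      = ((-1:ℂ)^v * (i:ℂ)^m * ρ^(i+v))
          * ∑ t ∈ range (v+1), ((i+t).choose i:ℂ) * (((m-i)-t).choose (v-t):ℂ) := by
        rw [Finset.mul_sum]
        exact Finset.sum_congr rfl fun t _ => by ring
    _ = ((-1:ℂ)^v * (i:ℂ)^m * ρ^(i+v)) * ((m+1).choose v : ℂ) := by
        congr 1
        exact_mod_cast congrArg (Nat.cast (R := ℂ)) hnat
    _ = (-1:ℂ)^v * ((m+1).choose v : ℂ) * (i:ℂ)^m * ρ^(i+v) := by ring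
end

section
/- Let n be a positive integer and let ρ be a complex number with ρ ≠ 0 and ρ ≠ 1. Then the Eulerian polynomial satisfies A_n(ρ) = ρ·(1−ρ)^n · Σ_{j=0}^{n} C(n,j) · H_j(1/ρ), where H_j are the Euler-Frobenius numbers. -/
open Finset Nat

/-- The Euler-Frobenius numbers `H_n(q)`, defined by the generating function
`(1-q)/(e^t - q) = Σ_{n≥0} H_n(q) t^n/n!` (as a formal power series). -/
noncomputable def eulerFrobenius (n : ℕ) (q : ℂ) : ℂ :=
  (n ! : ℂ) * PowerSeries.coeff n
    ((1 - q) • (PowerSeries.exp ℂ - PowerSeries.C q)⁻¹)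

noncomputable def Surj (n m : ℕ) : ℂ :=
  ∑ v ∈ Finset.range (m + 1), (-1 : ℂ) ^ v * (m.choose v : ℂ) * ((m : ℂ) - v) ^ n

noncomputable def Efun (m j : ℕ) : ℂ :=
  ∑ v ∈ Finset.range (m + 1), (-1 : ℂ) ^ v * (m.choose v : ℂ) * (v : ℂ) ^ j

lemma neg_one_pow_sub_ℂ {v m : ℕ} (h : v ≤ m) : (-1 : ℂ) ^ (m - v) = (-1) ^ m * (-1) ^ v := by
  have h1 : (-1 : ℂ) ^ (m - v) * (-1) ^ v = (-1) ^ m := by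
    rw [← pow_add, Nat.sub_add_cancel h]
  calc (-1 : ℂ) ^ (m - v) = (-1 : ℂ) ^ (m - v) * ((-1) ^ v * (-1) ^ v) := by
        rw [← pow_add, ← two_mul, pow_mul, neg_one_sq, one_pow, mul_one]
    _ = (-1) ^ m * (-1) ^ v := by rw [← mul_assoc, h1]

lemma Surj_eq_Efun (n m : ℕ) : Surj n m = (-1) ^ m * Efun m n := by
  unfold Surj Efun
  rw [mul_sum, ← Finset.sum_range_reflect]
  refine Finset.sum_congr rfl fun v hv => ?_
  rw [Finset.mem_range] at hv
  have hvm : v ≤ m := by omega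
  have h1 : m + 1 - 1 - v = m - v := by omega
  rw [h1, Nat.choose_symm hvm, Nat.cast_sub hvm, neg_one_pow_sub_ℂ hvm]
  push_cast
  ring

lemma Efun_succ (m j : ℕ) : Efun (m + 1) j = -∑ i ∈ Finset.range j, (j.choose i : ℂ) * Efun m i := by
  have hB : ∑ v ∈ Finset.range m, (-1 : ℂ) ^ v * (m.choose (v + 1) : ℂ) * ((v : ℂ) + 1) ^ j
      = (0 : ℂ) ^ j - Efun m j := by
    rw [eq_sub_iff_add_eq]
    unfold Efun
    rw [Finset.sum_range_succ' (fun v => (-1 : ℂ) ^ v * (m.choose v : ℂ) * (v : ℂ) ^ j) m]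
    rw [← add_assoc, ← Finset.sum_add_distrib]
    have : ∀ v ∈ Finset.range m, (-1 : ℂ) ^ v * (m.choose (v + 1) : ℂ) * ((v : ℂ) + 1) ^ j
        + (-1 : ℂ) ^ (v + 1) * (m.choose (v + 1) : ℂ) * ((v + 1 : ℕ) : ℂ) ^ j = 0 := by
      intro v _
      push_cast
      ring
    rw [Finset.sum_congr rfl this, Finset.sum_const_zero]
    simp
  have hA : ∑ v ∈ Finset.range (m + 1), (-1 : ℂ) ^ v * (m.choose v : ℂ) * ((v : ℂ) + 1) ^ j
      = ∑ i ∈ Finset.range (j + 1), (j.choose i : ℂ) * Efun m i := by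
    have expand : ∀ v : ℕ, ((v : ℂ) + 1) ^ j = ∑ i ∈ Finset.range (j + 1), (v : ℂ) ^ i * (j.choose i : ℂ) := by
      intro v
      rw [add_pow]
      refine Finset.sum_congr rfl fun i hi => ?_
      rw [one_pow, mul_one]
    calc ∑ v ∈ Finset.range (m + 1), (-1 : ℂ) ^ v * (m.choose v : ℂ) * ((v : ℂ) + 1) ^ j
        = ∑ v ∈ Finset.range (m + 1), ∑ i ∈ Finset.range (j + 1),
            (j.choose i : ℂ) * ((-1 : ℂ) ^ v * (m.choose v : ℂ) * (v : ℂ) ^ i) := by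
          refine Finset.sum_congr rfl fun v hv => ?_
          rw [expand, Finset.mul_sum]
          refine Finset.sum_congr rfl fun i hi => ?_
          ring
      _ = ∑ i ∈ Finset.range (j + 1), (j.choose i : ℂ) * Efun m i := by
          rw [Finset.sum_comm]
          refine Finset.sum_congr rfl fun i hi => ?_
          unfold Efun
          rw [Finset.mul_sum]
  -- main
  have hmain : Efun (m + 1) j =
      ∑ v ∈ Finset.range (m + 1), (-1 : ℂ) ^ (v + 1) * (((m.choose v : ℂ)) + (m.choose (v + 1) : ℂ)) * ((v : ℂ) + 1) ^ j
        + (0 : ℂ) ^ j := by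
    unfold Efun
    rw [Finset.sum_range_succ' (fun v => (-1 : ℂ) ^ v * ((m + 1).choose v : ℂ) * (v : ℂ) ^ j) (m + 1)]
    congr 1
    · refine Finset.sum_congr rfl fun v hv => ?_
      rw [Nat.choose_succ_succ]
      push_cast
      ring
    · simp
  have hBm : ∑ v ∈ Finset.range (m + 1), (-1 : ℂ) ^ v * (m.choose (v + 1) : ℂ) * ((v : ℂ) + 1) ^ j
      = (0 : ℂ) ^ j - Efun m j := by
    rw [Finset.sum_range_succ, hB, Nat.choose_succ_self]
    simp
  have key : Efun (m + 1) j = Efun m j - ∑ i ∈ Finset.range (j + 1), (j.choose i : ℂ) * Efun m i := by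
    rw [hmain]
    have : ∀ v ∈ Finset.range (m+1), (-1 : ℂ) ^ (v + 1) * (((m.choose v : ℂ)) + (m.choose (v + 1) : ℂ)) * ((v : ℂ) + 1) ^ j
        = -((-1 : ℂ) ^ v * (m.choose v : ℂ) * ((v : ℂ) + 1) ^ j) - ((-1 : ℂ) ^ v * (m.choose (v+1) : ℂ) * ((v : ℂ) + 1) ^ j) := by
      intro v _; ring
    rw [Finset.sum_congr rfl this, Finset.sum_sub_distrib, Finset.sum_neg_distrib, hA, hBm]
    ring
  rw [key, Finset.sum_range_succ]
  simp

lemma Efun_eq_zero : ∀ m j, j < m → Efun m j = 0 := by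
  intro m
  induction m with
  | zero => intro j hj; omega
  | succ m ih =>
    intro j hj
    rw [Efun_succ]
    have : ∀ i ∈ Finset.range j, (j.choose i : ℂ) * Efun m i = 0 := by
      intro i hi
      rw [Finset.mem_range] at hi
      rw [ih i (by omega), mul_zero]
    rw [Finset.sum_congr rfl this]
    simp

lemma Surj_succ_self (n : ℕ) : Surj n (n + 1) = 0 := by
  rw [Surj_eq_Efun, Efun_eq_zero (n+1) n (by omega), mul_zero]

lemma Surj_zero (n : ℕ) (hn : 0 < n) : Surj n 0 = 0 := by
  unfold Surj
  simp [zero_pow hn.ne']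

lemma coeff_exp_sub_one_pow (m n : ℕ) :
    (n ! : ℂ) * PowerSeries.coeff n ((PowerSeries.exp ℂ - 1) ^ m) = Surj n m := by
  have hexpand : (PowerSeries.exp ℂ - 1) ^ m
      = ∑ v ∈ Finset.range (m + 1), PowerSeries.C ((-1) ^ (m - v) * (m.choose v : ℂ)) * PowerSeries.exp ℂ ^ v := by
    rw [sub_eq_add_neg, add_pow]
    refine Finset.sum_congr rfl fun v hv => ?_
    rw [map_mul, map_pow, map_neg, map_one, map_natCast]
    ring
  rw [hexpand, map_sum, Finset.mul_sum, Surj_eq_Efun, Efun, Finset.mul_sum]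
  refine Finset.sum_congr rfl fun v hv => ?_
  rw [Finset.mem_range] at hv
  have hvm : v ≤ m := by omega
  rw [PowerSeries.coeff_C_mul, PowerSeries.exp_pow_eq_rescale_exp, PowerSeries.coeff_rescale,
    PowerSeries.coeff_exp, neg_one_pow_sub_ℂ hvm]
  have : (algebraMap ℚ ℂ) (1 / n !) = (1 : ℂ) / (n ! : ℂ) := by
    push_cast [map_div₀, map_natCast, map_one]
    norm_num
  rw [this]
  have hfac : (n ! : ℂ) ≠ 0 := Nat.cast_ne_zero.mpr n.factorial_ne_zero
  field_simp

lemma eulerFrobenius_expand (n N : ℕ) (h : n ≤ N) (q : ℂ) (hq : q ≠ 1) :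
    (n ! : ℂ) * PowerSeries.coeff n
      ((1 - q) • (PowerSeries.exp ℂ - PowerSeries.C q)⁻¹)
    = ∑ m ∈ Finset.range (N + 1), (-1 : ℂ) ^ m * Surj n m * ((1 - q)⁻¹) ^ m := by
  have hc0 : (1 : ℂ) - q ≠ 0 := sub_ne_zero.mpr (Ne.symm hq)
  set Phi : PowerSeries ℂ := PowerSeries.exp ℂ - PowerSeries.C q with hPhidef
  have hconst : PowerSeries.constantCoeff Phi = 1 - q := by
    simp [hPhidef, PowerSeries.constantCoeff_exp]
  have hinv : Phi * Phi⁻¹ = 1 := PowerSeries.mul_inv_cancel _ (by rw [hconst]; exact hc0)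
  have hPhi : Phi = (PowerSeries.exp ℂ - 1) + PowerSeries.C (1 - q) := by
    rw [hPhidef, map_sub, map_one]; ring
  set G : ℕ → PowerSeries ℂ := fun N => ∑ m ∈ Finset.range (N + 1),
    PowerSeries.C ((-1) ^ m * ((1 - q)⁻¹) ^ (m + 1)) * (PowerSeries.exp ℂ - 1) ^ m with hGdef
  have hG : ∀ N, Phi * G N = 1 - PowerSeries.C ((-1) ^ (N + 1) * ((1 - q)⁻¹) ^ (N + 1))
      * (PowerSeries.exp ℂ - 1) ^ (N + 1) := by
    intro N
    induction N with
    | zero =>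
      simp only [hGdef, zero_add, Finset.sum_range_one, pow_zero, pow_one, one_mul, mul_one]
      rw [hPhi, show ((-1 : ℂ)) * (1 - q)⁻¹ = -((1 - q)⁻¹) by ring, map_neg]
      rw [add_mul, ← map_mul, mul_inv_cancel₀ hc0, map_one]
      ring
    | succ N ih =>
      have hGsucc : G (N + 1) = G N + PowerSeries.C ((-1) ^ (N + 1) * ((1 - q)⁻¹) ^ (N + 2))
          * (PowerSeries.exp ℂ - 1) ^ (N + 1) := by
        rw [hGdef]; exact Finset.sum_range_succ _ _
      rw [hGsucc, mul_add, ih, hPhi]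
      have hCC : PowerSeries.C (1 - q) * PowerSeries.C ((-1) ^ (N + 1) * ((1 - q)⁻¹) ^ (N + 2))
          = PowerSeries.C ((-1) ^ (N + 1) * ((1 - q)⁻¹) ^ (N + 1)) := by
        rw [← map_mul]
        congr 1
        rw [pow_succ ((1 - q)⁻¹) (N + 1)]
        field_simp
      rw [show ((-1 : ℂ)) ^ (N + 1 + 1) * ((1 - q)⁻¹) ^ (N + 1 + 1)
            = -((-1) ^ (N + 1) * ((1 - q)⁻¹) ^ (N + 2)) by ring, map_neg]
      set A : PowerSeries ℂ := PowerSeries.C ((-1) ^ (N + 1) * ((1 - q)⁻¹) ^ (N + 1)) with hA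
      set B : PowerSeries ℂ := PowerSeries.C ((-1) ^ (N + 1) * ((1 - q)⁻¹) ^ (N + 2)) with hB
      set D : PowerSeries ℂ := PowerSeries.C (1 - q) with hD
      set E : PowerSeries ℂ := PowerSeries.exp ℂ - 1 with hE
      linear_combination (E ^ (N + 1)) * hCC
  -- coefficient extraction
  have hsplit : Phi⁻¹ = G N + Phi⁻¹ * (PowerSeries.C ((-1) ^ (N + 1) * ((1 - q)⁻¹) ^ (N + 1))
      * (PowerSeries.exp ℂ - 1) ^ (N + 1)) := by
    have h1 : Phi⁻¹ * (Phi * G N) = G N := by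
      rw [← mul_assoc, mul_comm Phi⁻¹ Phi, hinv, one_mul]
    rw [hG N, mul_sub, mul_one] at h1
    rw [← h1]; ring
  have hvanish : PowerSeries.coeff n (Phi⁻¹ * (PowerSeries.C ((-1) ^ (N + 1) * ((1 - q)⁻¹) ^ (N + 1))
      * (PowerSeries.exp ℂ - 1) ^ (N + 1))) = 0 := by
    have hXdvd : (PowerSeries.X : PowerSeries ℂ) ∣ (PowerSeries.exp ℂ - 1) := by
      rw [PowerSeries.X_dvd_iff]
      simp [PowerSeries.constantCoeff_exp]
    have : (PowerSeries.X : PowerSeries ℂ) ^ (N + 1) ∣ Phi⁻¹ * (PowerSeries.C ((-1) ^ (N + 1) * ((1 - q)⁻¹) ^ (N + 1))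
        * (PowerSeries.exp ℂ - 1) ^ (N + 1)) :=
      Dvd.dvd.mul_left (Dvd.dvd.mul_left (pow_dvd_pow_of_dvd hXdvd (N + 1)) _) _
    exact PowerSeries.X_pow_dvd_iff.mp this n (by omega)
  have hcoeff : PowerSeries.coeff n Phi⁻¹ = PowerSeries.coeff n (G N) := by
    rw [hsplit, map_add, hvanish, add_zero]
  rw [PowerSeries.coeff_smul, hcoeff]
  simp only [hGdef, map_sum, PowerSeries.coeff_C_mul, smul_eq_mul, Finset.mul_sum]
  refine Finset.sum_congr rfl fun m hm => ?_
  rw [← coeff_exp_sub_one_pow m n, pow_succ]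
  field_simp

lemma tri_sum (n : ℕ) (f : ℕ → ℕ → ℂ) :
    ∑ j ∈ Finset.range (n + 1), ∑ v ∈ Finset.range (j + 1), f j v
    = ∑ k ∈ Finset.range (n + 1), ∑ v ∈ Finset.range (n + 1 - k), f (k + v) v := by
  rw [Finset.sum_sigma', Finset.sum_sigma']
  refine Finset.sum_nbij' (fun p => ⟨p.1 - p.2, p.2⟩) (fun p => ⟨p.1 + p.2, p.2⟩) ?_ ?_ ?_ ?_ ?_
  · rintro ⟨j, v⟩ hp
    simp only [Finset.mem_sigma, Finset.mem_range] at hp ⊢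
    omega
  · rintro ⟨k, v⟩ hp
    simp only [Finset.mem_sigma, Finset.mem_range] at hp ⊢
    omega
  · rintro ⟨j, v⟩ hp
    simp only [Finset.mem_sigma, Finset.mem_range] at hp
    simp only [Sigma.mk.inj_iff]
    exact ⟨by omega, HEq.rfl⟩
  · rintro ⟨k, v⟩ hp
    simp only [Finset.mem_sigma, Finset.mem_range] at hp
    simp only [Sigma.mk.inj_iff]
    exact ⟨by omega, HEq.rfl⟩
  · rintro ⟨j, v⟩ hp
    simp only [Finset.mem_sigma, Finset.mem_range] at hp
    have h : j - v + v = j := by omega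
    rw [h]

lemma L1 (M N : ℕ) (ρ : ℂ) :
    ∑ v ∈ Finset.range (N + 2), (-1 : ℂ) ^ v * ((M + 1).choose v : ℂ) * ρ ^ v
    = ∑ v ∈ Finset.range (N + 2), (-1 : ℂ) ^ v * (M.choose v : ℂ) * ρ ^ v
      - ρ * ∑ v ∈ Finset.range (N + 1), (-1 : ℂ) ^ v * (M.choose v : ℂ) * ρ ^ v := by
  rw [Finset.sum_range_succ' (fun v => (-1 : ℂ) ^ v * ((M + 1).choose v : ℂ) * ρ ^ v) (N + 1),
      Finset.sum_range_succ' (fun v => (-1 : ℂ) ^ v * (M.choose v : ℂ) * ρ ^ v) (N + 1)]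
  simp only [Nat.choose_zero_right, Nat.cast_one, pow_zero, mul_one, one_mul]
  rw [Finset.mul_sum, add_sub_right_comm, ← Finset.sum_sub_distrib]
  congr 1
  refine Finset.sum_congr rfl fun v hv => ?_
  rw [Nat.choose_succ_succ]
  push_cast
  ring

lemma claimP (k : ℕ) (ρ : ℂ) : ∀ N : ℕ,
    ∑ v ∈ Finset.range (N + 1), (-1 : ℂ) ^ v * ((N + k + 1).choose v : ℂ) * ρ ^ v
    = ∑ w ∈ Finset.range (N + 1), (-1 : ℂ) ^ w * ((k + w).choose w : ℂ) * ρ ^ w * (1 - ρ) ^ (N - w) := by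
  intro N
  induction N with
  | zero => simp
  | succ N ih =>
    have hL : ∑ v ∈ Finset.range (N + 1 + 1), (-1 : ℂ) ^ v * ((N + 1 + k + 1).choose v : ℂ) * ρ ^ v
        = (1 - ρ) * (∑ v ∈ Finset.range (N + 1), (-1 : ℂ) ^ v * ((N + k + 1).choose v : ℂ) * ρ ^ v)
          + (-1 : ℂ) ^ (N + 1) * ((N + k + 1).choose (N + 1) : ℂ) * ρ ^ (N + 1) := by
      have h1 : N + 1 + k + 1 = (N + k + 1) + 1 := by omega
      rw [h1, show N + 1 + 1 = N + 2 by rfl, L1 (N + k + 1) N ρ, Finset.sum_range_succ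
        (fun v => (-1 : ℂ) ^ v * ((N + k + 1).choose v : ℂ) * ρ ^ v) (N + 1)]
      ring
    have key : ∑ w ∈ Finset.range (N + 1 + 1), (-1 : ℂ) ^ w * ((k + w).choose w : ℂ) * ρ ^ w * (1 - ρ) ^ (N + 1 - w)
        = (1 - ρ) * (∑ w ∈ Finset.range (N + 1), (-1 : ℂ) ^ w * ((k + w).choose w : ℂ) * ρ ^ w * (1 - ρ) ^ (N - w))
          + (-1 : ℂ) ^ (N + 1) * ((k + (N + 1)).choose (N + 1) : ℂ) * ρ ^ (N + 1) := by
      rw [Finset.sum_range_succ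
        (fun w => (-1 : ℂ) ^ w * ((k + w).choose w : ℂ) * ρ ^ w * (1 - ρ) ^ (N + 1 - w)) (N + 1),
        Finset.mul_sum]
      congr 1
      · refine Finset.sum_congr rfl fun w hw => ?_
        rw [Finset.mem_range] at hw
        rw [show N + 1 - w = (N - w) + 1 by omega, pow_succ]
        ring
      · simp
    rw [hL, ih, key, show N + k + 1 = k + (N + 1) by omega]

lemma eulerianPoly_eq (n : ℕ) (ρ : ℂ) :
    eulerianPoly n ρ = ∑ m ∈ Finset.range (n + 1), Surj n m * ρ ^ m * (1 - ρ) ^ (n - m) := by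
  have lhs_eq : eulerianPoly n ρ
      = ∑ k ∈ Finset.range (n + 1), ∑ v ∈ Finset.range (n + 1 - k),
          (-1 : ℂ) ^ v * ((n + 1).choose v : ℂ) * (k : ℂ) ^ n * ρ ^ (k + v) := by
    unfold eulerianPoly eulerianNumber
    have h1 : ∀ j ∈ Finset.range (n + 1),
        (∑ v ∈ Finset.range (j + 1), (-1 : ℂ) ^ v * ((n + 1).choose v : ℂ) * ((j : ℂ) - v) ^ n) * ρ ^ j
        = ∑ v ∈ Finset.range (j + 1), (-1 : ℂ) ^ v * ((n + 1).choose v : ℂ) * ((j : ℂ) - v) ^ n * ρ ^ j := by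
      intro j _; rw [Finset.sum_mul]
    rw [Finset.sum_congr rfl h1,
      tri_sum n (fun j v => (-1 : ℂ) ^ v * ((n + 1).choose v : ℂ) * ((j : ℂ) - v) ^ n * ρ ^ j)]
    refine Finset.sum_congr rfl fun k hk => Finset.sum_congr rfl fun v hv => ?_
    have : ((k + v : ℕ) : ℂ) - (v : ℂ) = (k : ℂ) := by push_cast; ring
    rw [this]
  have rhs_eq : ∑ m ∈ Finset.range (n + 1), Surj n m * ρ ^ m * (1 - ρ) ^ (n - m)
      = ∑ k ∈ Finset.range (n + 1), ∑ w ∈ Finset.range (n + 1 - k),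
          (-1 : ℂ) ^ w * ((k + w).choose w : ℂ) * (k : ℂ) ^ n * ρ ^ (k + w) * (1 - ρ) ^ (n - (k + w)) := by
    unfold Surj
    have h1 : ∀ m ∈ Finset.range (n + 1),
        (∑ w ∈ Finset.range (m + 1), (-1 : ℂ) ^ w * (m.choose w : ℂ) * ((m : ℂ) - w) ^ n) * ρ ^ m * (1 - ρ) ^ (n - m)
        = ∑ w ∈ Finset.range (m + 1), (-1 : ℂ) ^ w * (m.choose w : ℂ) * ((m : ℂ) - w) ^ n * ρ ^ m * (1 - ρ) ^ (n - m) := by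
      intro m _; rw [Finset.sum_mul, Finset.sum_mul]
    rw [Finset.sum_congr rfl h1,
      tri_sum n (fun m w => (-1 : ℂ) ^ w * (m.choose w : ℂ) * ((m : ℂ) - w) ^ n * ρ ^ m * (1 - ρ) ^ (n - m))]
    refine Finset.sum_congr rfl fun k hk => Finset.sum_congr rfl fun w hw => ?_
    have h2 : ((k + w : ℕ) : ℂ) - (w : ℂ) = (k : ℂ) := by push_cast; ring
    rw [h2]
  rw [lhs_eq, rhs_eq]
  refine Finset.sum_congr rfl fun k hk => ?_
  rw [Finset.mem_range] at hk
  have hkn : k ≤ n := by omega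
  calc ∑ v ∈ Finset.range (n + 1 - k), (-1 : ℂ) ^ v * ((n + 1).choose v : ℂ) * (k : ℂ) ^ n * ρ ^ (k + v)
      = ∑ v ∈ Finset.range ((n - k) + 1), ((k : ℂ) ^ n * ρ ^ k) * ((-1 : ℂ) ^ v * ((n + 1).choose v : ℂ) * ρ ^ v) := by
        rw [show n + 1 - k = (n - k) + 1 by omega]
        refine Finset.sum_congr rfl fun v hv => ?_
        rw [pow_add]
        ring
    _ = ((k : ℂ) ^ n * ρ ^ k) * ∑ v ∈ Finset.range ((n - k) + 1), (-1 : ℂ) ^ v * ((n + 1).choose v : ℂ) * ρ ^ v := by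
        rw [Finset.mul_sum]
    _ = ((k : ℂ) ^ n * ρ ^ k) * ∑ w ∈ Finset.range ((n - k) + 1),
          (-1 : ℂ) ^ w * ((k + w).choose w : ℂ) * ρ ^ w * (1 - ρ) ^ ((n - k) - w) := by
        rw [show n + 1 = (n - k) + k + 1 by omega, claimP k ρ (n - k)]
    _ = ∑ w ∈ Finset.range (n + 1 - k),
          (-1 : ℂ) ^ w * ((k + w).choose w : ℂ) * (k : ℂ) ^ n * ρ ^ (k + w) * (1 - ρ) ^ (n - (k + w)) := by
        rw [Finset.mul_sum, show (n - k) + 1 = n + 1 - k by omega]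
        refine Finset.sum_congr rfl fun w hw => ?_
        rw [Finset.mem_range] at hw
        rw [show (n - k) - w = n - (k + w) by omega, pow_add]
        ring


lemma sumB (n m : ℕ) : ∑ j ∈ Finset.range (n + 1), (n.choose j : ℂ) * Surj j m
    = ∑ v ∈ Finset.range (m + 1), (-1 : ℂ) ^ v * (m.choose v : ℂ) * ((m : ℂ) - v + 1) ^ n := by
  unfold Surj
  have h1 : ∀ j ∈ Finset.range (n + 1), (n.choose j : ℂ) *
      (∑ v ∈ Finset.range (m + 1), (-1 : ℂ) ^ v * (m.choose v : ℂ) * ((m : ℂ) - v) ^ j)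
      = ∑ v ∈ Finset.range (m + 1), (n.choose j : ℂ) * ((-1 : ℂ) ^ v * (m.choose v : ℂ) * ((m : ℂ) - v) ^ j) := by
    intro j _; rw [Finset.mul_sum]
  rw [Finset.sum_congr rfl h1, Finset.sum_comm]
  refine Finset.sum_congr rfl fun v hv => ?_
  have h2 : ((m : ℂ) - v + 1) ^ n
      = ∑ j ∈ Finset.range (n + 1), ((m : ℂ) - v) ^ j * 1 ^ (n - j) * (n.choose j : ℂ) := by
    rw [← add_pow]
  rw [h2, Finset.mul_sum]
  refine Finset.sum_congr rfl fun j hj => ?_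
  ring

lemma sumT (n m : ℕ) :
    ∑ v ∈ Finset.range (m + 1), (-1 : ℂ) ^ v * (m.choose v : ℂ) * ((m : ℂ) - v + 1) ^ n
    = Surj n m + Surj n (m + 1) := by
  have hB : ∑ v ∈ Finset.range (m + 1), (-1 : ℂ) ^ v * (m.choose (v + 1) : ℂ) * ((m : ℂ) - v) ^ n
      = ((m : ℂ) + 1) ^ n
        - ∑ v ∈ Finset.range (m + 1), (-1 : ℂ) ^ v * (m.choose v : ℂ) * ((m : ℂ) - v + 1) ^ n := by
    rw [eq_sub_iff_add_eq, Finset.sum_range_succ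
      (fun v => (-1 : ℂ) ^ v * (m.choose (v + 1) : ℂ) * ((m : ℂ) - v) ^ n) m,
      Nat.choose_succ_self,
      Finset.sum_range_succ' (fun v => (-1 : ℂ) ^ v * (m.choose v : ℂ) * ((m : ℂ) - v + 1) ^ n) m]
    have h3 : ∀ v ∈ Finset.range m,
        (-1 : ℂ) ^ (v + 1) * (m.choose (v + 1) : ℂ) * ((m : ℂ) - ((v : ℕ) + 1 : ℕ) + 1) ^ n
        = -((-1 : ℂ) ^ v * (m.choose (v + 1) : ℂ) * ((m : ℂ) - v) ^ n) := by
      intro v _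
      have hb : ((m : ℂ) - ((v : ℕ) + 1 : ℕ) + 1) = (m : ℂ) - v := by push_cast; ring
      rw [hb]
      ring
    rw [Finset.sum_congr rfl h3]
    push_cast
    rw [Finset.sum_neg_distrib, show ((m : ℂ) - 0 + 1) = (m : ℂ) + 1 by ring]
    simp
  have h1 : Surj n (m + 1)
      = ∑ v ∈ Finset.range (m + 1),
          ((-1 : ℂ) ^ (v + 1) * (((m + 1).choose (v + 1) : ℕ) : ℂ) * (((m + 1 : ℕ) : ℂ) - ((v + 1 : ℕ) : ℂ)) ^ n)
        + ((m : ℂ) + 1) ^ n := by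
    unfold Surj
    rw [Finset.sum_range_succ' (fun v => (-1 : ℂ) ^ v * (((m + 1).choose v : ℕ) : ℂ)
      * (((m + 1 : ℕ) : ℂ) - (v : ℂ)) ^ n) (m + 1)]
    congr 1
    push_cast
    simp
  have h2 : ∀ v ∈ Finset.range (m + 1),
      (-1 : ℂ) ^ (v + 1) * (((m + 1).choose (v + 1) : ℕ) : ℂ) * (((m + 1 : ℕ) : ℂ) - ((v + 1 : ℕ) : ℂ)) ^ n
      = -((-1 : ℂ) ^ v * (m.choose v : ℂ) * ((m : ℂ) - v) ^ n)
        - (-1 : ℂ) ^ v * (m.choose (v + 1) : ℂ) * ((m : ℂ) - v) ^ n := by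
    intro v _
    have hb : (((m + 1 : ℕ) : ℂ) - ((v + 1 : ℕ) : ℂ)) = (m : ℂ) - v := by push_cast; ring
    rw [hb, Nat.choose_succ_succ]
    push_cast
    ring
  rw [h1, Finset.sum_congr rfl h2, Finset.sum_sub_distrib, Finset.sum_neg_distrib, hB]
  unfold Surj
  ring

lemma telesc (n : ℕ) (hn : 0 < n) (ρ : ℂ) :
    ∑ m ∈ Finset.range (n + 1), (Surj n m + Surj n (m + 1)) * (ρ ^ (m + 1) * (1 - ρ) ^ (n - m))
    = ∑ m ∈ Finset.range (n + 1), Surj n m * ρ ^ m * (1 - ρ) ^ (n - m) := by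
  set h : ℕ → ℂ := fun m => Surj n m * ρ ^ m * (1 - ρ) ^ (n + 1 - m) with hh
  have hstep : ∀ m ∈ Finset.range (n + 1),
      (Surj n m + Surj n (m + 1)) * (ρ ^ (m + 1) * (1 - ρ) ^ (n - m))
      = Surj n m * ρ ^ (m + 1) * (1 - ρ) ^ (n - m) + h (m + 1) := by
    intro m hm
    rw [hh]
    simp only []
    rw [show n + 1 - (m + 1) = n - m by omega]
    ring
  rw [Finset.sum_congr rfl hstep, Finset.sum_add_distrib]
  have h2 : ∑ m ∈ Finset.range (n + 1), h (m + 1) = ∑ m ∈ Finset.range (n + 1), h m := by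
    have h3 := Finset.sum_range_succ' h (n + 1)
    have h4 := Finset.sum_range_succ h (n + 1)
    have h0 : h 0 = 0 := by rw [hh]; simp [Surj_zero n hn]
    have htop : h (n + 1) = 0 := by rw [hh]; simp [Surj_succ_self n]
    rw [h4, htop, add_zero] at h3
    rw [h3, h0, add_zero]
  rw [h2]
  rw [← Finset.sum_add_distrib]
  refine Finset.sum_congr rfl fun m hm => ?_
  rw [Finset.mem_range] at hm
  rw [hh]
  simp only []
  rw [show n + 1 - m = (n - m) + 1 by omega, pow_succ]
  ring

theorem stmt7 (n : ℕ) (hn : 0 < n) (ρ : ℂ) (hρ0 : ρ ≠ 0) (hρ1 : ρ ≠ 1) :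
    eulerianPoly n ρ =
      ρ * (1 - ρ) ^ n *
        ∑ j ∈ Finset.range (n + 1), (n.choose j : ℂ) * eulerFrobenius j (1 / ρ) := by
  have hq1 : (1 : ℂ) / ρ ≠ 1 := by
    intro h
    apply hρ1
    rw [div_eq_one_iff_eq hρ0] at h
    exact h.symm
  have hρc : (1 : ℂ) - ρ ≠ 0 := sub_ne_zero.mpr (Ne.symm hρ1)
  have hEF : ∀ j ∈ Finset.range (n + 1), (n.choose j : ℂ) * eulerFrobenius j (1 / ρ)
      = ∑ m ∈ Finset.range (n + 1),
          (n.choose j : ℂ) * ((-1 : ℂ) ^ m * Surj j m * ((1 - 1 / ρ)⁻¹) ^ m) := by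
    intro j hj
    rw [Finset.mem_range] at hj
    rw [eulerFrobenius, eulerFrobenius_expand j n (by omega) (1 / ρ) hq1, Finset.mul_sum]
  rw [Finset.sum_congr rfl hEF, Finset.sum_comm]
  have hswap : ∀ m ∈ Finset.range (n + 1),
      ∑ j ∈ Finset.range (n + 1), (n.choose j : ℂ) * ((-1 : ℂ) ^ m * Surj j m * ((1 - 1 / ρ)⁻¹) ^ m)
      = (-1 : ℂ) ^ m * ((1 - 1 / ρ)⁻¹) ^ m * (Surj n m + Surj n (m + 1)) := by
    intro m hm
    have : ∑ j ∈ Finset.range (n + 1), (n.choose j : ℂ) * ((-1 : ℂ) ^ m * Surj j m * ((1 - 1 / ρ)⁻¹) ^ m)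
        = (-1 : ℂ) ^ m * ((1 - 1 / ρ)⁻¹) ^ m * ∑ j ∈ Finset.range (n + 1), (n.choose j : ℂ) * Surj j m := by
      rw [Finset.mul_sum]
      refine Finset.sum_congr rfl fun j hj => ?_
      ring
    rw [this, sumB n m, sumT n m]
  rw [Finset.sum_congr rfl hswap]
  -- turn the prefactor into ρ^(m+1) (1-ρ)^(n-m)
  have hy : (-1 : ℂ) * ((1 - 1 / ρ)⁻¹) = ρ * (1 - ρ)⁻¹ := by
    have h1 : (1 : ℂ) - 1 / ρ = (ρ - 1) / ρ := by field_simp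
    have h2 : ((ρ - 1 : ℂ))⁻¹ = -((1 - ρ)⁻¹) := by rw [← inv_neg, neg_sub]
    rw [h1, inv_div, div_eq_mul_inv, h2]
    ring
  have hfinal : ρ * (1 - ρ) ^ n *
      ∑ m ∈ Finset.range (n + 1),
        (-1 : ℂ) ^ m * ((1 - 1 / ρ)⁻¹) ^ m * (Surj n m + Surj n (m + 1))
      = ∑ m ∈ Finset.range (n + 1), (Surj n m + Surj n (m + 1)) * (ρ ^ (m + 1) * (1 - ρ) ^ (n - m)) := by
    rw [Finset.mul_sum]
    refine Finset.sum_congr rfl fun m hm => ?_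
    rw [Finset.mem_range] at hm
    have hsplitpow : ((1 : ℂ) - ρ) ^ n = (1 - ρ) ^ (n - m) * (1 - ρ) ^ m := by
      rw [← pow_add]
      congr 1
      omega
    have hmp : (-1 : ℂ) ^ m * ((1 - 1 / ρ)⁻¹) ^ m = ρ ^ m * ((1 - ρ)⁻¹) ^ m := by
      rw [← mul_pow, hy, mul_pow]
    rw [hmp, hsplitpow]
    have hcan : ((1 : ℂ) - ρ) ^ m * ((1 - ρ)⁻¹) ^ m = 1 := by
      rw [← mul_pow, mul_inv_cancel₀ hρc, one_pow]
    calc ρ * ((1 - ρ) ^ (n - m) * (1 - ρ) ^ m) * (ρ ^ m * ((1 - ρ)⁻¹) ^ m * (Surj n m + Surj n (m + 1)))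
        = (Surj n m + Surj n (m + 1)) * (ρ ^ (m + 1) * (1 - ρ) ^ (n - m))
          * ((1 - ρ) ^ m * ((1 - ρ)⁻¹) ^ m) := by ring
      _ = (Surj n m + Surj n (m + 1)) * (ρ ^ (m + 1) * (1 - ρ) ^ (n - m)) := by
          rw [hcan, mul_one]
  rw [hfinal, telesc n hn ρ, eulerianPoly_eq n ρ]
end

section
/- Let n be a positive integer and let ρ be a complex number with ρ ≠ 1. Then A_{n−1}(ρ) = −((1−ρ)^n / n) · 𝓑_n(ρ), relating the Eulerian polynomials to the Apostol-Bernoulli numbers. -/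
open Finset Nat

open Polynomial
lemma fd_poly : ∀ (n : ℕ) (p : Polynomial ℂ), p.degree < n →
    (fwdDiff (1:ℕ))^[n] (fun x : ℕ => p.eval (x : ℂ)) = 0 := by
  intro n
  induction n with
  | zero =>
    intro p hp
    have h0 : p = 0 := Polynomial.degree_eq_bot.mp
      (WithBot.lt_zero_iff.mp (by exact_mod_cast hp))
    subst h0
    funext x; simp
  | succ n ih =>
    intro p hp
    rw [Function.iterate_succ_apply]
    have hΔ : fwdDiff (1:ℕ) (fun x : ℕ => p.eval (x : ℂ)) =
        fun x : ℕ => (p.comp (X + 1) - p).eval (x:ℂ) := by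
      funext x
      simp only [fwdDiff, Polynomial.eval_sub, Polynomial.eval_comp, Polynomial.eval_add,
        Polynomial.eval_X, Polynomial.eval_one]
      push_cast
      ring_nf
    rw [hΔ]
    apply ih
    rcases eq_or_ne p 0 with rfl | hp0
    · simp only [Polynomial.zero_comp, sub_zero, Polynomial.degree_zero]
      exact WithBot.bot_lt_coe _
    · have hX1 : (X + 1 : Polynomial ℂ) = X + C 1 := by rw [map_one]
      have hlcX : (X + 1 : Polynomial ℂ).leadingCoeff = 1 := by
        rw [hX1]; exact (monic_X_add_C (1:ℂ))
      have hndX : (X + 1 : Polynomial ℂ).natDegree = 1 := by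
        rw [hX1]; exact natDegree_X_add_C 1
      have h2 : (p.comp (X + 1)).leadingCoeff = p.leadingCoeff := by
        rw [Polynomial.leadingCoeff_comp (by rw [hndX]; norm_num), hlcX, one_pow, mul_one]
      have hcomp0 : p.comp (X + 1) ≠ 0 := fun h => by
        rw [h, Polynomial.leadingCoeff_zero] at h2
        exact hp0 (Polynomial.leadingCoeff_eq_zero.mp h2.symm)
      have hnd : (p.comp (X + 1)).natDegree = p.natDegree := by
        rw [Polynomial.natDegree_comp, hndX, mul_one]
      have hc : (p.comp (X + 1)).degree = p.degree := by
        rw [Polynomial.degree_eq_natDegree hcomp0, Polynomial.degree_eq_natDegree hp0, hnd]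
      have hlt := Polynomial.degree_sub_lt hc hcomp0 h2
      calc (p.comp (X+1) - p).degree < p.degree := by rwa [hc] at hlt
        _ ≤ (n : WithBot ℕ) := Order.le_of_lt_succ (by exact_mod_cast hp)

lemma eulerianNumber_eq_zero {m j : ℕ} (h : m < j) : eulerianNumber m j = 0 := by
  set n := m + 1 with hn
  have hexp : eulerianNumber m j
      = ∑ v ∈ range (n+1), (-1:ℂ)^v * (n.choose v : ℂ) * ((j:ℂ) - v)^m := by
    rw [eulerianNumber]
    symm
    apply Finset.sum_subset
    · exact Finset.range_subset_range.mpr (by omega)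
    · intro v hv hnv
      simp only [Finset.mem_range] at hv hnv
      rw [Nat.choose_eq_zero_of_lt (by omega)]
      simp
  set p : Polynomial ℂ := (X + C ((j:ℂ) - n))^m with hp
  have hdeg : p.degree < n := by
    rw [hp, Polynomial.degree_pow, Polynomial.degree_X_add_C]
    simp only [nsmul_eq_mul, mul_one]
    exact_mod_cast Nat.lt_succ_self m
  have h0 := congrFun (fd_poly n p hdeg) 0
  rw [fwdDiff_iter_eq_sum_shift] at h0
  simp only [Pi.zero_apply] at h0
  rw [hexp, ← Finset.sum_range_reflect, ← h0]
  apply Finset.sum_congr rfl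
  intro k hk
  simp only [Finset.mem_range] at hk
  have hkn : k ≤ n := by omega
  have hred : n + 1 - 1 - k = n - k := by omega
  rw [hred, Nat.choose_symm hkn]
  have hcast : ((n - k : ℕ) : ℂ) = (n:ℂ) - k := by
    push_cast [Nat.cast_sub hkn]; ring
  rw [hcast, hp]
  simp only [smul_one_smul, zero_add, Polynomial.eval_pow, Polynomial.eval_add,
    Polynomial.eval_X, Polynomial.eval_C, zsmul_eq_mul]
  push_cast
  ring_nf

noncomputable def B (m : ℕ) (ρ : ℂ) : ℂ := ∑' k : ℕ, (k:ℂ)^m * ρ^k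

lemma summable_B (m : ℕ) {ρ : ℂ} (h : ‖ρ‖ < 1) :
    Summable (fun k : ℕ => (k:ℂ)^m * ρ^k) :=
  summable_pow_mul_geometric_of_norm_lt_one m h

lemma claim1 (m : ℕ) {ρ : ℂ} (h : ‖ρ‖ < 1) :
    eulerianPoly m ρ = (1-ρ)^(m+1) * B m ρ := by
  classical
  -- G v j
  set G : ℕ → ℕ → ℂ := fun v j =>
    (-1:ℂ)^v * ((m+1).choose v : ℂ) * (if v ≤ j then ((j - v : ℕ):ℂ)^m else 0) * ρ^j with hG
  have hGsum : ∀ v, Summable (G v) := by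
    intro v
    rw [← summable_nat_add_iff v]
    have : (fun k : ℕ => G v (k + v)) =
        fun k : ℕ => ((-1:ℂ)^v * ((m+1).choose v : ℂ) * ρ^v) * ((k:ℂ)^m * ρ^k) := by
      funext k
      simp only [hG, Nat.le_add_left, if_pos, Nat.add_sub_cancel]
      rw [pow_add]
      ring
    rw [this]
    exact (summable_B m h).mul_left _
  have hGt : ∀ v, ∑' j, G v j = (-1:ℂ)^v * ((m+1).choose v : ℂ) * ρ^v * B m ρ := by
    intro v
    rw [← Summable.sum_add_tsum_nat_add v (hGsum v)]
    have hz : ∑ i ∈ range v, G v i = 0 := by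
      apply Finset.sum_eq_zero
      intro i hi
      simp only [Finset.mem_range] at hi
      simp [hG, Nat.not_le.mpr hi]
    rw [hz, zero_add]
    have : (fun k : ℕ => G v (k + v)) =
        fun k : ℕ => ((-1:ℂ)^v * ((m+1).choose v : ℂ) * ρ^v) * ((k:ℂ)^m * ρ^k) := by
      funext k
      simp only [hG, Nat.le_add_left, if_pos, Nat.add_sub_cancel]
      rw [pow_add]; ring
    rw [this, tsum_mul_left]
    rfl
  -- binomial expansion of (1-ρ)^(m+1)
  have hbin : (1-ρ)^(m+1) = ∑ v ∈ range (m+2), (-ρ)^v * (1:ℂ)^(m+1-v) * ((m+1).choose v : ℂ) := by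
    rw [show (1:ℂ) - ρ = -ρ + 1 by ring, add_pow]
  have step1 : (1-ρ)^(m+1) * B m ρ = ∑ v ∈ range (m+2), ∑' j, G v j := by
    rw [hbin, Finset.sum_mul]
    apply Finset.sum_congr rfl
    intro v _
    rw [hGt v, neg_pow]
    ring
  rw [step1, ← Summable.tsum_finsetSum (fun v _ => hGsum v)]
  -- inner sum equals eulerianNumber m j * ρ^j
  have hinner : ∀ j, ∑ v ∈ range (m+2), G v j = eulerianNumber m j * ρ^j := by
    intro j
    set N := m + 2 + (j + 1) with hN
    have h1 : ∑ v ∈ range (m+2), G v j = ∑ v ∈ range N, G v j := by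
      apply Finset.sum_subset (Finset.range_subset_range.mpr (by omega))
      intro v _ hv
      simp only [Finset.mem_range] at hv
      simp [hG, Nat.choose_eq_zero_of_lt (show m + 1 < v by omega)]
    have h2 : eulerianNumber m j * ρ^j = ∑ v ∈ range N, G v j := by
      rw [eulerianNumber, Finset.sum_mul]
      rw [show (∑ v ∈ range N, G v j) = ∑ v ∈ range (j+1), G v j from
        (Finset.sum_subset (Finset.range_subset_range.mpr (by omega)) ?_).symm]
      · apply Finset.sum_congr rfl
        intro v hv
        simp only [Finset.mem_range] at hv
        have hvj : v ≤ j := by omega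
        simp only [hG, if_pos hvj]
        rw [Nat.cast_sub hvj]
      · intro v _ hv
        simp only [Finset.mem_range] at hv
        simp [hG, Nat.not_le.mpr (by omega : j < v)]
    rw [h1, h2]
  rw [tsum_congr hinner]
  rw [tsum_eq_sum (s := range (m+1)) ?_]
  · rfl
  · intro j hj
    simp only [Finset.mem_range] at hj
    rw [eulerianNumber_eq_zero (by omega), zero_mul]

lemma shift (m : ℕ) (hm : 0 < m) {ρ : ℂ} (h : ‖ρ‖ < 1) :
    B m ρ = ρ * ∑ i ∈ range (m+1), (m.choose i : ℂ) * B i ρ := by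
  have step1 : ∑ i ∈ range (m+1), (m.choose i : ℂ) * B i ρ
      = ∑' n : ℕ, ((n:ℂ)+1)^m * ρ^n := by
    have : ∀ i ∈ range (m+1), (m.choose i : ℂ) * B i ρ
        = ∑' n : ℕ, (m.choose i : ℂ) * ((n:ℂ)^i * ρ^n) := by
      intro i _
      rw [B, tsum_mul_left]
    rw [Finset.sum_congr rfl this, ← Summable.tsum_finsetSum (fun i _ => ((summable_B i h).mul_left _))]
    apply tsum_congr
    intro n
    rw [show ((n:ℂ)+1)^m = ∑ i ∈ range (m+1), (n:ℂ)^i * (1:ℂ)^(m-i) * (m.choose i : ℂ) from add_pow ..]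
    rw [Finset.sum_mul]
    apply Finset.sum_congr rfl
    intro i _
    ring
  rw [step1, ← tsum_mul_left]
  have step2 : ∀ n : ℕ, ρ * (((n:ℂ)+1)^m * ρ^n) = (((n+1 : ℕ):ℂ))^m * ρ^(n+1) := by
    intro n
    push_cast
    ring
  rw [tsum_congr step2]
  rw [B, Summable.tsum_eq_zero_add (summable_B m h)]
  simp [zero_pow hm.ne']

/-- the Eulerian polynomial as an element of `Polynomial ℂ` -/
noncomputable def EP (m : ℕ) : Polynomial ℂ :=
  ∑ j ∈ range (m+1), C (eulerianNumber m j) * X^j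

lemma EP_eval (m : ℕ) (z : ℂ) : (EP m).eval z = eulerianPoly m z := by
  simp [EP, eulerianPoly, Polynomial.eval_finset_sum]

lemma star_small (m : ℕ) (hm : 0 < m) {ρ : ℂ} (h : ‖ρ‖ < 1) :
    eulerianPoly m ρ = ρ * ∑ k ∈ range (m+1), (m.choose k : ℂ) * ((1-ρ)^(m-k) * eulerianPoly k ρ) := by
  have hr : ∀ k ∈ range (m+1), (m.choose k : ℂ) * ((1-ρ)^(m-k) * eulerianPoly k ρ)
      = (1-ρ)^(m+1) * ((m.choose k : ℂ) * B k ρ) := by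
    intro k hk
    simp only [Finset.mem_range] at hk
    rw [claim1 k h, show (1-ρ)^(m-k) * ((1-ρ)^(k+1) * B k ρ) = (1-ρ)^((m-k)+(k+1)) * B k ρ by
      rw [pow_add]; ring, show (m-k)+(k+1) = m+1 by omega]
    ring
  rw [Finset.sum_congr rfl hr, ← Finset.mul_sum, claim1 m h, shift m hm h]
  ring

lemma star (m : ℕ) (hm : 0 < m) (ρ : ℂ) :
    eulerianPoly m ρ = ρ * ∑ k ∈ range (m+1), (m.choose k : ℂ) * ((1-ρ)^(m-k) * eulerianPoly k ρ) := by
  set D : Polynomial ℂ :=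
    EP m - X * ∑ k ∈ range (m+1), C ((m.choose k : ℂ)) * ((1 - X)^(m-k) * EP k) with hD
  have hev : ∀ z : ℂ, D.eval z =
      eulerianPoly m z - z * ∑ k ∈ range (m+1), (m.choose k : ℂ) * ((1-z)^(m-k) * eulerianPoly k z) := by
    intro z
    simp [hD, EP_eval, Polynomial.eval_finset_sum]
  have hroots : ∀ q : ℕ, D.IsRoot (1/((q:ℂ)+2)) := by
    intro q
    have hcast : ((q:ℂ)+2) = ((q+2:ℕ):ℂ) := by push_cast; ring
    have hq2 : ((q:ℂ)+2) ≠ 0 := by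
      rw [hcast]
      exact Nat.cast_ne_zero.mpr (by omega : q+2 ≠ 0)
    have hnn : ‖(q:ℂ)+2‖ = (q:ℝ)+2 := by
      rw [hcast, Complex.norm_natCast]; push_cast; ring
    have hnorm : ‖(1/((q:ℂ)+2))‖ < 1 := by
      rw [norm_div, norm_one, hnn, div_lt_one (by positivity)]
      have : (0:ℝ) ≤ q := Nat.cast_nonneg q
      linarith
    rw [Polynomial.IsRoot, hev, star_small m hm hnorm, sub_self]
  have hinf : Set.Infinite {z : ℂ | D.IsRoot z} := by
    apply Set.infinite_of_injective_forall_mem (f := fun q : ℕ => 1/((q:ℂ)+2))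
    case hi =>
      intro a b hab
      simp only [one_div] at hab
      have h2 : ((a:ℂ)+2) = ((b:ℂ)+2) := inv_inj.mp hab
      have : (a:ℂ) = b := by linear_combination h2
      exact_mod_cast this
    case hf => exact hroots
  have hD0 : D = 0 := Polynomial.eq_zero_of_infinite_isRoot D hinf
  have := hev ρ
  rw [hD0] at this
  simp only [Polynomial.eval_zero] at this
  exact sub_eq_zero.mp this.symm

noncomputable def Fc (ρ : ℂ) (e : ℕ) : ℂ := -(eulerianPoly e ρ) / ((1-ρ)^(e+1) * (e)!)

lemma eulerianPoly_zero (ρ : ℂ) : eulerianPoly 0 ρ = 1 := by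
  simp [eulerianPoly, eulerianNumber]

lemma main_inv (ρ : ℂ) (hρ : ρ ≠ 1) :
    (ρ • PowerSeries.exp ℂ - 1) * PowerSeries.mk (Fc ρ) = 1 := by
  have h1 : (1:ℂ) - ρ ≠ 0 := sub_ne_zero.mpr (Ne.symm hρ)
  ext d
  rw [PowerSeries.coeff_mul, PowerSeries.coeff_one,
    Finset.Nat.sum_antidiagonal_eq_sum_range_succ_mk]
  have hco : ∀ i : ℕ, (PowerSeries.coeff i) (ρ • PowerSeries.exp ℂ - 1)
      = ρ * (1 / i !) - if i = 0 then 1 else 0 := by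
    intro i
    rw [map_sub, map_smul, PowerSeries.coeff_one, PowerSeries.coeff_exp]
    simp [smul_eq_mul]
  simp only [hco, PowerSeries.coeff_mk]
  rcases Nat.eq_zero_or_pos d with rfl | hd
  · simp only [Finset.sum_range_one, if_pos rfl]
    rw [show (0:ℕ) - 0 = 0 from rfl]
    simp only [Fc, eulerianPoly_zero, Nat.factorial_zero, Nat.cast_one, pow_one, mul_one]
    field_simp
    simp only [ite_true, zero_add, pow_one, one_mul]
    ring
  · rw [if_neg hd.ne']
    have hsplit : ∀ i ∈ range (d+1),
        (ρ * (1 / i !) - if i = 0 then 1 else 0) * Fc ρ (d - i)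
        = ρ * (1 / i !) * Fc ρ (d - i) - (if i = 0 then 1 else 0) * Fc ρ (d - i) := by
      intro i _; ring
    rw [Finset.sum_congr rfl hsplit, Finset.sum_sub_distrib]
    have hdelta : ∑ i ∈ range (d+1), (if i = 0 then (1:ℂ) else 0) * Fc ρ (d - i) = Fc ρ d := by
      rw [Finset.sum_eq_single 0]
      · simp
      · intro i _ hi; rw [if_neg hi, zero_mul]
      · intro h; exact absurd (Finset.mem_range.mpr (by omega)) h
    rw [hdelta, sub_eq_zero]
    rw [← Finset.sum_range_reflect]
    have hre : ∀ i ∈ range (d+1),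
        ρ * (1 / (d + 1 - 1 - i)! ) * Fc ρ (d - (d + 1 - 1 - i)) = ρ * (1 / (d - i)!) * Fc ρ i := by
      intro i hi
      simp only [Finset.mem_range] at hi
      rw [show d + 1 - 1 - i = d - i by omega, show d - (d - i) = i by omega]
    rw [Finset.sum_congr rfl hre]
    -- now the key recurrence
    have hstar := star d hd ρ
    simp only [Fc]
    rw [hstar]
    rw [Finset.mul_sum, neg_div, Finset.sum_div, ← Finset.sum_neg_distrib]
    apply Finset.sum_congr rfl
    intro k hk
    simp only [Finset.mem_range] at hk
    have hkd : k ≤ d := by omega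
    have hfac : (d ! : ℂ) = (d.choose k : ℂ) * k ! * (d-k)! := by
      exact_mod_cast congrArg (Nat.cast : ℕ → ℂ) (Nat.choose_mul_factorial_mul_factorial hkd).symm
    have hpow : (1-ρ)^(d+1) = (1-ρ)^(k+1) * (1-ρ)^(d-k) := by
      rw [← pow_add, show k+1+(d-k) = d+1 by omega]
    rw [hfac, hpow]
    have hk1 : ((k)! : ℂ) ≠ 0 := Nat.cast_ne_zero.mpr (Nat.factorial_ne_zero k)
    have hk2 : ((d-k)! : ℂ) ≠ 0 := Nat.cast_ne_zero.mpr (Nat.factorial_ne_zero (d-k))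
    have hch : ((d.choose k : ℕ) : ℂ) ≠ 0 := Nat.cast_ne_zero.mpr (Nat.choose_pos hkd).ne'
    have hp1 : (1-ρ)^(k+1) ≠ 0 := pow_ne_zero _ h1
    have hp2 : (1-ρ)^(d-k) ≠ 0 := pow_ne_zero _ h1
    field_simp

lemma inv_val (ρ : ℂ) (hρ : ρ ≠ 1) :
    (ρ • PowerSeries.exp ℂ - 1)⁻¹ = PowerSeries.mk (Fc ρ) := by
  have hc : PowerSeries.constantCoeff (ρ • PowerSeries.exp ℂ - 1) ≠ 0 := by
    simp only [map_sub, PowerSeries.constantCoeff_smul, PowerSeries.constantCoeff_exp, map_one, smul_eq_mul, mul_one]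
    exact sub_ne_zero.mpr hρ
  rw [PowerSeries.inv_eq_iff_mul_eq_one hc]
  rw [mul_comm]
  exact main_inv ρ hρ

theorem stmt8 (n : ℕ) (hn : 0 < n) (ρ : ℂ) (hρ : ρ ≠ 1) :
    eulerianPoly (n - 1) ρ = -((1 - ρ) ^ n / (n : ℂ)) * apostolBernoulliNum n ρ := by
  obtain ⟨e, rfl⟩ : ∃ e, n = e + 1 := ⟨n - 1, by omega⟩
  have h1 : (1:ℂ) - ρ ≠ 0 := sub_ne_zero.mpr (Ne.symm hρ)
  rw [apostolBernoulliNum, inv_val ρ hρ, PowerSeries.coeff_succ_X_mul, PowerSeries.coeff_mk]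
  simp only [Nat.add_sub_cancel, Fc]
  rw [Nat.factorial_succ]
  have he : ((e)! : ℂ) ≠ 0 := Nat.cast_ne_zero.mpr (Nat.factorial_ne_zero e)
  have he1 : ((e:ℂ)+1) ≠ 0 := by
    have : ((e+1:ℕ):ℂ) ≠ 0 := Nat.cast_ne_zero.mpr (by omega)
    push_cast at this; exact this
  have hp : (1-ρ)^(e+1) ≠ 0 := pow_ne_zero _ h1
  push_cast
  field_simp
end

section
/- Let n be a positive integer, let ρ be a complex number with ρ ≠ 1, and let ω be any complex number. Then Σ_{j=1}^{n} (−1)^{j+1} · C(n,j) · j · (ρ−1)^{−j} · A_{j−1}(ρ) · ( ρ(ω+1)^{n−j} − ω^{n−j} ) = n·ω^{n−1}. -/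
open Finset Nat

lemma alt0 (t : ℕ) : ∀ j, t < j →
    ∑ v ∈ range (j+1), (-1:ℂ)^v * (j.choose v : ℂ) * (v:ℂ)^t = 0 := by
  induction t using Nat.strong_induction_on with
  | _ t ih =>
  intro j hj
  match t, hj with
  | 0, hj =>
    have h := Int.alternating_sum_range_choose_of_ne (by omega : j ≠ 0)
    have h2 : ((∑ i ∈ range (j+1), (-1:ℤ)^i * (j.choose i : ℤ) : ℤ) : ℂ) = 0 := by
      rw [h]; norm_num
    rw [← h2]; push_cast; simp
  | (t+1), hj =>
    obtain ⟨j', rfl⟩ : ∃ j', j = j' + 1 := ⟨j - 1, by omega⟩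
    rw [Finset.sum_range_succ']
    simp only [Nat.cast_zero, zero_pow (Nat.succ_ne_zero t), mul_zero, add_zero]
    have key : ∀ u : ℕ, (-1:ℂ)^(u+1) * (((j'+1).choose (u+1) : ℕ):ℂ) * (((u:ℕ):ℂ)+1)^(t+1)
        = -((j':ℂ)+1) * ((-1:ℂ)^u * (j'.choose u : ℂ) * ((u:ℂ)+1)^t) := by
      intro u
      have h1 : ((j'+1) * j'.choose u : ℕ) = ((j'+1).choose (u+1)) * (u+1) :=
        Nat.add_one_mul_choose_eq j' u
      have h1' : ((j':ℂ)+1) * (j'.choose u : ℂ) = (((j'+1).choose (u+1) : ℕ) : ℂ) * ((u:ℂ)+1) := by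
        exact_mod_cast congrArg (Nat.cast : ℕ → ℂ) h1
      rw [pow_succ ((u:ℂ)+1) t, pow_succ (-1:ℂ) u]
      linear_combination (-(1:ℂ))^u * ((u:ℂ)+1)^t * h1'
    calc ∑ u ∈ range (j'+1), (-1:ℂ)^(u+1) * (((j'+1).choose (u+1):ℕ):ℂ) * (((u+1:ℕ)):ℂ)^(t+1)
        = ∑ u ∈ range (j'+1), -((j':ℂ)+1) * ((-1:ℂ)^u * (j'.choose u : ℂ) * ((u:ℂ)+1)^t) := by
          apply Finset.sum_congr rfl; intro u _
          rw [← key u]; push_cast; ring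
      _ = -((j':ℂ)+1) * ∑ u ∈ range (j'+1), (-1:ℂ)^u * (j'.choose u : ℂ) * ((u:ℂ)+1)^t := by
          rw [← Finset.mul_sum]
      _ = 0 := by
          have expand : ∀ u : ℕ, ((u:ℂ)+1)^t = ∑ s ∈ range (t+1), (u:ℂ)^s * (t.choose s : ℂ) := by
            intro u; simpa using add_pow (u:ℂ) 1 t
          have hz : ∑ u ∈ range (j'+1), (-1:ℂ)^u * (j'.choose u : ℂ) * ((u:ℂ)+1)^t = 0 := by
            calc ∑ u ∈ range (j'+1), (-1:ℂ)^u * (j'.choose u : ℂ) * ((u:ℂ)+1)^t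
                = ∑ u ∈ range (j'+1), ∑ s ∈ range (t+1),
                    (t.choose s : ℂ) * ((-1:ℂ)^u * (j'.choose u : ℂ) * (u:ℂ)^s) := by
                  apply Finset.sum_congr rfl; intro u _
                  rw [expand u, Finset.mul_sum]
                  apply Finset.sum_congr rfl; intro s _; ring
              _ = ∑ s ∈ range (t+1), (t.choose s : ℂ) *
                    ∑ u ∈ range (j'+1), (-1:ℂ)^u * (j'.choose u : ℂ) * (u:ℂ)^s := by
                  rw [Finset.sum_comm]
                  apply Finset.sum_congr rfl; intro s _
                  rw [Finset.mul_sum]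
              _ = 0 := by
                  apply Finset.sum_eq_zero; intro s hs
                  simp only [Finset.mem_range] at hs
                  rw [ih s (by omega) j' (by omega), mul_zero]
          rw [hz, mul_zero]

lemma altc (j p : ℕ) (hp : p < j) (c : ℂ) :
    ∑ v ∈ range (j+1), (-1:ℂ)^v * (j.choose v : ℂ) * (c - (v:ℂ))^p = 0 := by
  have expand : ∀ v : ℕ, (c - (v:ℂ))^p
      = ∑ s ∈ range (p+1), (p.choose s : ℂ) * (-1)^s * c^(p-s) * (v:ℂ)^s := by
    intro v
    rw [sub_eq_add_neg, add_comm, add_pow]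
    apply Finset.sum_congr rfl; intro s hs
    rw [neg_pow]
    ring
  calc ∑ v ∈ range (j+1), (-1:ℂ)^v * (j.choose v : ℂ) * (c - (v:ℂ))^p
      = ∑ v ∈ range (j+1), ∑ s ∈ range (p+1),
          ((p.choose s : ℂ) * (-1)^s * c^(p-s)) * ((-1:ℂ)^v * (j.choose v : ℂ) * (v:ℂ)^s) := by
        apply Finset.sum_congr rfl; intro v _
        rw [expand v, Finset.mul_sum]
        apply Finset.sum_congr rfl; intro s _; ring
    _ = ∑ s ∈ range (p+1), ((p.choose s : ℂ) * (-1)^s * c^(p-s)) *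
          ∑ v ∈ range (j+1), (-1:ℂ)^v * (j.choose v : ℂ) * (v:ℂ)^s := by
        rw [Finset.sum_comm]
        apply Finset.sum_congr rfl; intro s _
        rw [Finset.mul_sum]
    _ = 0 := by
        apply Finset.sum_eq_zero; intro s hs
        simp only [Finset.mem_range] at hs
        rw [alt0 s j (by omega), mul_zero]

lemma binom_deriv (m : ℕ) (hm : 1 ≤ m) (x : ℂ) :
    ∑ j ∈ Icc 1 m, (m.choose j : ℂ) * (j:ℂ) * x^(j-1) = (m:ℂ) * (1+x)^(m-1) := by
  obtain ⟨m', rfl⟩ : ∃ m', m = m' + 1 := ⟨m - 1, by omega⟩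
  have h1 : Icc 1 (m'+1) = Ico 1 (m'+2) := by rfl
  rw [h1, Finset.sum_Ico_eq_sum_range]
  simp only [show m' + 2 - 1 = m' + 1 from rfl]
  have key : ∀ u : ℕ, (((m'+1).choose (1+u) : ℕ):ℂ) * ((1+u:ℕ):ℂ) * x^(1+u-1)
      = ((m'+1:ℕ):ℂ) * ((m'.choose u : ℕ):ℂ) * x^u := by
    intro u
    have h2 : ((m'+1) * m'.choose u : ℕ) = ((m'+1).choose (u+1)) * (u+1) :=
      Nat.add_one_mul_choose_eq m' u
    have h2' : ((m'+1:ℕ):ℂ) * (m'.choose u : ℂ) = (((m'+1).choose (u+1) : ℕ) : ℂ) * ((u+1:ℕ):ℂ) := by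
      exact_mod_cast congrArg (Nat.cast : ℕ → ℂ) h2
    rw [show 1 + u - 1 = u from by omega, show 1 + u = u + 1 from by omega]
    rw [h2']
  calc ∑ u ∈ range (m'+1), (((m'+1).choose (1+u):ℕ):ℂ) * ((1+u:ℕ):ℂ) * x^(1+u-1)
      = ∑ u ∈ range (m'+1), ((m'+1:ℕ):ℂ) * ((m'.choose u:ℕ):ℂ) * x^u := by
        apply Finset.sum_congr rfl; intro u _; exact key u
    _ = ((m'+1:ℕ):ℂ) * ∑ u ∈ range (m'+1), x^u * 1^(m'-u) * ((m'.choose u:ℕ):ℂ) := by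
        rw [Finset.mul_sum]; apply Finset.sum_congr rfl; intro u _; ring
    _ = ((m'+1:ℕ):ℂ) * (x+1)^m' := by rw [← add_pow]
    _ = ((m'+1:ℕ):ℂ) * (1+x)^(m'+1-1) := by rw [add_comm x 1]; norm_num

lemma eulerianPoly_eq_tsum (p : ℕ) (ρ : ℂ) (hρ : ‖ρ‖ < 1) :
    (1-ρ)^(p+1) * ∑' k : ℕ, (k:ℂ)^p * ρ^k = eulerianPoly p ρ := by
  have hsum : Summable (fun k : ℕ => (k:ℂ)^p * ρ^k) :=
    summable_pow_mul_geometric_of_norm_lt_one p hρ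
  set g : ℕ → ℕ → ℂ := fun v i => if v ≤ i then ((i:ℂ) - v)^p * ρ^i else 0 with hg
  have hginj : ∀ v : ℕ, Function.Injective (fun k : ℕ => k + v) := by
    intro v a b h; simpa using h
  have hzero : ∀ v i, i ∉ Set.range (fun k : ℕ => k + v) → g v i = 0 := by
    intro v i hi
    rw [hg]
    simp only
    rw [if_neg]
    intro hle
    exact hi ⟨i - v, by simpa using Nat.sub_add_cancel hle⟩
  have hcomp : ∀ v, ((g v) ∘ (fun k : ℕ => k + v)) = fun k : ℕ => ρ^v * ((k:ℂ)^p * ρ^k) := by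
    intro v; funext k
    simp only [Function.comp, hg]
    rw [if_pos (by omega : v ≤ k + v)]
    push_cast
    rw [pow_add]
    ring_nf
  have hgsum : ∀ v, Summable (g v) := by
    intro v
    rw [← Function.Injective.summable_iff (hginj v) (hzero v), hcomp v]
    exact hsum.mul_left _
  have hshift : ∀ v, ∑' i, g v i = ρ^v * ∑' k : ℕ, (k:ℂ)^p * ρ^k := by
    intro v
    rw [← Function.Injective.tsum_eq (hginj v) (Function.support_subset_iff'.mpr (hzero v))]
    rw [show (fun c => g v ((fun k : ℕ => k + v) c)) = ((g v) ∘ (fun k : ℕ => k + v)) from rfl]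
    rw [hcomp v, tsum_mul_left]
  have hbinom : (1-ρ)^(p+1) = ∑ v ∈ range (p+2), (-1:ℂ)^v * ((p+1).choose v : ℂ) * ρ^v := by
    rw [sub_eq_add_neg, add_comm, add_pow]
    apply Finset.sum_congr rfl
    intro v hv
    rw [neg_pow]
    ring
  calc (1-ρ)^(p+1) * ∑' k : ℕ, (k:ℂ)^p * ρ^k
      = ∑ v ∈ range (p+2), ((-1:ℂ)^v * ((p+1).choose v : ℂ)) * (ρ^v * ∑' k : ℕ, (k:ℂ)^p * ρ^k) := by
        rw [hbinom, Finset.sum_mul]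
        apply Finset.sum_congr rfl; intro v _; ring
    _ = ∑ v ∈ range (p+2), ((-1:ℂ)^v * ((p+1).choose v : ℂ)) * ∑' i, g v i := by
        apply Finset.sum_congr rfl; intro v _; rw [hshift v]
    _ = ∑ v ∈ range (p+2), ∑' i, ((-1:ℂ)^v * ((p+1).choose v : ℂ)) * g v i := by
        apply Finset.sum_congr rfl; intro v _; rw [tsum_mul_left]
    _ = ∑' i, ∑ v ∈ range (p+2), ((-1:ℂ)^v * ((p+1).choose v : ℂ)) * g v i := by
        rw [Summable.tsum_finsetSum]
        intro v _
        exact (hgsum v).mul_left _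
    _ = eulerianPoly p ρ := by
        rw [tsum_eq_sum (s := range (p+1))
          (by
            intro i hi
            simp only [Finset.mem_range, not_lt] at hi
            have : ∀ v ∈ range (p+2), ((-1:ℂ)^v * ((p+1).choose v : ℂ)) * g v i
                = ((-1:ℂ)^v * ((p+1).choose v : ℂ) * ((i:ℂ) - v)^p) * ρ^i := by
              intro v hv
              simp only [Finset.mem_range] at hv
              rw [hg]
              simp only
              rw [if_pos (by omega : v ≤ i)]
              ring
            rw [Finset.sum_congr rfl this, ← Finset.sum_mul, altc (p+1) p (by omega) (i:ℂ),
              zero_mul])]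
        unfold eulerianPoly eulerianNumber
        apply Finset.sum_congr rfl
        intro i hi
        simp only [Finset.mem_range] at hi
        have hsub : range (i+1) ⊆ range (p+2) := by
          intro x hx; simp only [Finset.mem_range] at *; omega
        have hout : ∀ v ∈ range (p+2), v ∉ range (i+1) →
            ((-1:ℂ)^v * ((p+1).choose v : ℂ)) * g v i = 0 := by
          intro v hv hnv
          simp only [Finset.mem_range] at hv hnv
          rw [hg]
          simp only
          rw [if_neg (by omega), mul_zero]
        rw [← Finset.sum_subset hsub hout]
        rw [Finset.sum_mul]
        apply Finset.sum_congr rfl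
        intro v hv
        simp only [Finset.mem_range] at hv
        rw [hg]
        simp only
        rw [if_pos (by omega : v ≤ i)]
        ring

lemma keyG_small (m : ℕ) (hm : 1 ≤ m) (ρ : ℂ) (hρ : ‖ρ‖ < 1) :
    ρ * ∑ j ∈ Icc 1 m, (m.choose j : ℂ) * (j:ℂ) * (1-ρ)^(m-j) * eulerianPoly (j-1) ρ
      = (m:ℂ) * eulerianPoly (m-1) ρ - (if m = 1 then (1-ρ) else 0) := by
  have hsq : ∀ q : ℕ, Summable (fun k : ℕ => (k:ℂ)^q * ρ^k) := fun q =>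
    summable_pow_mul_geometric_of_norm_lt_one q hρ
  have step1 : ∀ j ∈ Icc 1 m,
      (m.choose j : ℂ) * (j:ℂ) * (1-ρ)^(m-j) * eulerianPoly (j-1) ρ
      = (1-ρ)^m * ∑' k : ℕ, ((m.choose j : ℂ) * (j:ℂ) * (k:ℂ)^(j-1)) * ρ^k := by
    intro j hj
    simp only [Finset.mem_Icc] at hj
    have h1 : eulerianPoly (j-1) ρ = (1-ρ)^j * ∑' k : ℕ, (k:ℂ)^(j-1) * ρ^k := by
      rw [← eulerianPoly_eq_tsum (j-1) ρ hρ, show j - 1 + 1 = j from by omega]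
    have h2 : ∑' k : ℕ, ((m.choose j : ℂ) * (j:ℂ) * (k:ℂ)^(j-1)) * ρ^k
        = ((m.choose j : ℂ) * (j:ℂ)) * ∑' k : ℕ, (k:ℂ)^(j-1) * ρ^k := by
      rw [← tsum_mul_left]; apply tsum_congr; intro k; ring
    rw [h1, h2, show (1-ρ)^m = (1-ρ)^(m-j) * (1-ρ)^j from by rw [← pow_add]; congr 1; omega]
    ring
  have hsumj : ∀ j ∈ Icc 1 m, Summable (fun k : ℕ => ((m.choose j : ℂ) * (j:ℂ) * (k:ℂ)^(j-1)) * ρ^k) := by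
    intro j _
    have := (hsq (j-1)).mul_left ((m.choose j : ℂ) * (j:ℂ))
    simpa [mul_assoc] using this
  calc ρ * ∑ j ∈ Icc 1 m, (m.choose j : ℂ) * (j:ℂ) * (1-ρ)^(m-j) * eulerianPoly (j-1) ρ
      = ρ * ((1-ρ)^m * ∑ j ∈ Icc 1 m, ∑' k : ℕ, ((m.choose j : ℂ) * (j:ℂ) * (k:ℂ)^(j-1)) * ρ^k) := by
        rw [Finset.sum_congr rfl step1, ← Finset.mul_sum]
    _ = ρ * ((1-ρ)^m * ∑' k : ℕ, ∑ j ∈ Icc 1 m, ((m.choose j : ℂ) * (j:ℂ) * (k:ℂ)^(j-1)) * ρ^k) := by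
        rw [Summable.tsum_finsetSum hsumj]
    _ = ρ * ((1-ρ)^m * ∑' k : ℕ, ((m:ℂ) * (1+(k:ℂ))^(m-1)) * ρ^k) := by
        congr 2
        apply tsum_congr; intro k
        rw [← Finset.sum_mul, binom_deriv m hm (k:ℂ)]
    _ = (1-ρ)^m * ((m:ℂ) * ∑' k : ℕ, (((k+1:ℕ):ℂ))^(m-1) * ρ^(k+1)) := by
        have hh : ρ * ∑' k : ℕ, ((m:ℂ) * (1+(k:ℂ))^(m-1)) * ρ^k
            = (m:ℂ) * ∑' k : ℕ, (((k+1:ℕ):ℂ))^(m-1) * ρ^(k+1) := by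
          rw [← tsum_mul_left, ← tsum_mul_left]
          apply tsum_congr; intro k
          push_cast
          rw [pow_succ]
          ring
        rw [← hh]
        ring
    _ = (1-ρ)^m * ((m:ℂ) * ((∑' k : ℕ, (k:ℂ)^(m-1) * ρ^k) - (0:ℂ)^(m-1))) := by
        have h0 := Summable.tsum_eq_zero_add (hsq (m-1))
        congr 2
        rw [h0]
        push_cast
        ring
    _ = (m:ℂ) * eulerianPoly (m-1) ρ - (if m = 1 then (1-ρ) else 0) := by
        have hP : (1-ρ)^m * ∑' k : ℕ, (k:ℂ)^(m-1) * ρ^k = eulerianPoly (m-1) ρ := by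
          rw [← eulerianPoly_eq_tsum (m-1) ρ hρ, show m - 1 + 1 = m from by omega]
        rcases Nat.eq_or_lt_of_le hm with h1 | h1
        · rw [← h1]
          simp only [if_pos rfl]
          rw [← h1] at hP
          simp only [pow_one] at hP ⊢
          rw [show (1:ℕ) - 1 = 0 from rfl] at hP ⊢
          rw [← hP]
          norm_num
          ring
        · rw [if_neg (by omega), zero_pow (by omega : m - 1 ≠ 0), ← hP]
          ring

noncomputable def AP (n : ℕ) : Polynomial ℂ :=
  ∑ i ∈ Finset.range (n+1), Polynomial.C (eulerianNumber n i) * Polynomial.X ^ i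

lemma AP_eval (n : ℕ) (x : ℂ) : (AP n).eval x = eulerianPoly n x := by
  unfold AP eulerianPoly
  rw [Polynomial.eval_finset_sum]
  simp

lemma keyG (m : ℕ) (hm : 1 ≤ m) (ρ : ℂ) :
    ρ * ∑ j ∈ Icc 1 m, (m.choose j : ℂ) * (j:ℂ) * (1-ρ)^(m-j) * eulerianPoly (j-1) ρ
      = (m:ℂ) * eulerianPoly (m-1) ρ - (if m = 1 then (1-ρ) else 0) := by
  set P1 : Polynomial ℂ := Polynomial.X *
    ∑ j ∈ Icc 1 m, Polynomial.C ((m.choose j : ℂ) * (j:ℂ)) * (1 - Polynomial.X)^(m-j) * AP (j-1)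
    with hP1
  set P2 : Polynomial ℂ := Polynomial.C (m:ℂ) * AP (m-1)
    - (if m = 1 then (1 - Polynomial.X) else 0) with hP2
  have heval : ∀ x : ℂ, P1.eval x
      = x * ∑ j ∈ Icc 1 m, (m.choose j : ℂ) * (j:ℂ) * (1-x)^(m-j) * eulerianPoly (j-1) x := by
    intro x
    rw [hP1]
    rw [Polynomial.eval_mul, Polynomial.eval_finset_sum]
    congr 1
    · simp
    apply Finset.sum_congr rfl
    intro j _
    simp [AP_eval]
  have heval2 : ∀ x : ℂ, P2.eval x
      = (m:ℂ) * eulerianPoly (m-1) x - (if m = 1 then (1-x) else 0) := by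
    intro x
    rw [hP2]
    rcases eq_or_ne m 1 with h | h <;> simp [h, AP_eval]
  have hPeq : P1 = P2 := by
    apply Polynomial.eq_of_infinite_eval_eq
    have hinj : Function.Injective (fun n : ℕ => (1:ℂ) / ((n:ℂ) + 2)) := by
      intro a b hab
      have hne : ∀ c : ℕ, ((c:ℂ) + 2) ≠ 0 := by
        intro c
        have : ((c:ℂ) + 2) = ((c + 2 : ℕ) : ℂ) := by push_cast; ring
        rw [this]
        exact Nat.cast_ne_zero.mpr (by omega)
      simp only [one_div] at hab
      have h2 : (a:ℂ) + 2 = (b:ℂ) + 2 := by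
        have := congrArg (fun z : ℂ => z⁻¹) hab
        simpa [inv_inv] using this
      have h3 : (a:ℂ) = (b:ℂ) := by
        have := add_right_cancel h2
        exact this
      exact_mod_cast h3
    apply Set.infinite_of_injective_forall_mem hinj
    intro n
    simp only [Set.mem_setOf_eq]
    rw [heval, heval2]
    apply keyG_small m hm
    have hc : ((n:ℂ) + 2) = ((n + 2 : ℕ) : ℂ) := by push_cast; ring
    rw [norm_div, norm_one, hc, Complex.norm_natCast]
    rw [div_lt_one (Nat.cast_pos.mpr (show 0 < n + 2 by omega))]
    exact Nat.one_lt_cast.mpr (by omega)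
  have hev := congrArg (fun P : Polynomial ℂ => P.eval ρ) hPeq
  rw [heval ρ, heval2 ρ] at hev
  exact hev

theorem stmt9 (n : ℕ) (hn : 0 < n) (ρ : ℂ) (hρ : ρ ≠ 1) (ω : ℂ) :
    ∑ j ∈ Finset.Icc 1 n,
        (-1 : ℂ) ^ (j + 1) * (n.choose j : ℂ) * (j : ℂ) * (ρ - 1) ^ (-(j : ℤ)) *
          eulerianPoly (j - 1) ρ * (ρ * (ω + 1) ^ (n - j) - ω ^ (n - j)) =
      (n : ℂ) * ω ^ (n - 1) := by
  have h1ρ : (1:ℂ) - ρ ≠ 0 := sub_ne_zero.mpr (Ne.symm hρ)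
  set d : ℕ → ℂ := fun j => (n.choose j : ℂ) * (j:ℂ) * ((1-ρ)^j)⁻¹ * eulerianPoly (j-1) ρ with hd
  -- Step A: rewrite terms
  have hterm : ∀ j ∈ Icc 1 n,
      (-1 : ℂ) ^ (j + 1) * (n.choose j : ℂ) * (j : ℂ) * (ρ - 1) ^ (-(j : ℤ)) *
        eulerianPoly (j - 1) ρ * (ρ * (ω + 1) ^ (n - j) - ω ^ (n - j))
      = -(d j * (ρ * (ω + 1) ^ (n - j) - ω ^ (n - j))) := by
    intro j _
    rw [hd]
    simp only
    rw [zpow_neg, zpow_natCast]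
    rw [show (ρ - 1) = -(1 - ρ) from by ring, neg_pow (1-ρ) j, mul_inv]
    have ha : ((-1:ℂ)^j)⁻¹ = (-1:ℂ)^j := by
      rw [← inv_pow]; norm_num
    rw [ha]
    have h5 : (-1:ℂ)^(j+1) * (-1:ℂ)^j = -1 := by
      rw [← pow_add, show j+1+j = 2*j+1 from by omega, pow_succ, pow_mul]
      norm_num
    linear_combination ((n.choose j : ℂ) * (j:ℂ) * ((1-ρ)^j)⁻¹ * eulerianPoly (j-1) ρ *
      (ρ * (ω + 1) ^ (n - j) - ω ^ (n - j))) * h5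
  rw [Finset.sum_congr rfl hterm, Finset.sum_neg_distrib]
  -- now goal : -(∑ j, d j * (...)) = n * ω^(n-1)
  have main : ∑ j ∈ Icc 1 n, d j * (ρ * (ω + 1) ^ (n - j) - ω ^ (n - j))
      = -((n:ℂ) * ω ^ (n-1)) := by
    -- expand (ω+1)^(n-j)
    have hreindex : ∀ j ∈ Icc 1 n, (ω+1)^(n-j)
        = ∑ m ∈ Icc j n, ((n-j).choose (n-m) : ℂ) * ω^(n-m) := by
      intro j hj
      simp only [Finset.mem_Icc] at hj
      rw [add_pow]
      refine Finset.sum_nbij' (fun k => n - k) (fun m => n - m) ?_ ?_ ?_ ?_ ?_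
      · intro k hk; simp only [Finset.mem_range, Finset.mem_Icc] at *; omega
      · intro m hm; simp only [Finset.mem_range, Finset.mem_Icc] at *; omega
      · intro k hk; simp only [Finset.mem_range] at hk; show n - (n - k) = k; omega
      · intro m hm; simp only [Finset.mem_Icc] at hm; show n - (n - m) = m; omega
      · intro k hk
        simp only [Finset.mem_range] at hk
        rw [show n - (n - k) = k from by omega]
        simp
        ring
    calc ∑ j ∈ Icc 1 n, d j * (ρ * (ω + 1) ^ (n - j) - ω ^ (n - j))
        = (∑ j ∈ Icc 1 n, ∑ m ∈ Icc j n, ρ * (d j * ((n-j).choose (n-m) : ℂ)) * ω^(n-m))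
          - ∑ j ∈ Icc 1 n, d j * ω ^ (n - j) := by
          rw [← Finset.sum_sub_distrib]
          apply Finset.sum_congr rfl
          intro j hj
          rw [hreindex j hj, mul_sub, Finset.mul_sum]
          congr 1
          rw [Finset.mul_sum]
          apply Finset.sum_congr rfl
          intro m _
          ring
      _ = (∑ m ∈ Icc 1 n, ∑ j ∈ Icc 1 m, ρ * (d j * ((n-j).choose (n-m) : ℂ)) * ω^(n-m))
          - ∑ m ∈ Icc 1 n, d m * ω ^ (n - m) := by
          rw [Finset.sum_comm' (s := Icc 1 n) (t := fun j => Icc j n) (t' := Icc 1 n)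
            (s' := fun m => Icc 1 m) (by intro x y; simp only [Finset.mem_Icc]; omega)]
      _ = ∑ m ∈ Icc 1 n, (ρ * ∑ j ∈ Icc 1 m, d j * ((n-j).choose (n-m) : ℂ) - d m) * ω^(n-m) := by
          rw [← Finset.sum_sub_distrib]
          apply Finset.sum_congr rfl
          intro m _
          rw [sub_mul, Finset.mul_sum, Finset.sum_mul]
      _ = ∑ m ∈ Icc 1 n, (if m = 1 then -(n:ℂ) else 0) * ω^(n-m) := by
          apply Finset.sum_congr rfl
          intro m hm
          simp only [Finset.mem_Icc] at hm
          congr 1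
          -- per-m identity
          have hstep : ∀ j ∈ Icc 1 m, d j * ((n-j).choose (n-m) : ℂ)
              = ((n.choose m : ℂ) * ((1-ρ)^m)⁻¹) *
                ((m.choose j : ℂ) * (j:ℂ) * (1-ρ)^(m-j) * eulerianPoly (j-1) ρ) := by
            intro j hj
            simp only [Finset.mem_Icc] at hj
            have hcb : (n-j).choose (n-m) = (n-j).choose (m-j) := by
              rw [show n - m = (n-j) - (m-j) from by omega]
              exact Nat.choose_symm (by omega)
            have hcm : (n.choose m) * (m.choose j) = (n.choose j) * ((n-j).choose (m-j)) :=
              Nat.choose_mul (by omega)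
            have hcm' : ((n.choose m : ℕ):ℂ) * ((m.choose j : ℕ):ℂ)
                = ((n.choose j : ℕ):ℂ) * (((n-j).choose (m-j) : ℕ):ℂ) := by
              exact_mod_cast congrArg (Nat.cast : ℕ → ℂ) hcm
            have hpow : ((1-ρ)^j)⁻¹ = (1-ρ)^(m-j) * ((1-ρ)^m)⁻¹ := by
              have hjne : (1-ρ)^j ≠ 0 := pow_ne_zero _ h1ρ
              have hmne : (1-ρ)^m ≠ 0 := pow_ne_zero _ h1ρ
              field_simp
              rw [← pow_add]
              congr 1
              omega
            rw [hd]
            simp only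
            rw [hcb, hpow]
            linear_combination (-((j:ℂ) * (1-ρ)^(m-j) * ((1-ρ)^m)⁻¹ * eulerianPoly (j-1) ρ)) * hcm'
          rw [Finset.sum_congr rfl hstep, ← Finset.mul_sum]
          have hkey := keyG m hm.1 ρ
          calc ρ * (((n.choose m : ℂ) * ((1-ρ)^m)⁻¹) *
                ∑ j ∈ Icc 1 m, (m.choose j : ℂ) * (j:ℂ) * (1-ρ)^(m-j) * eulerianPoly (j-1) ρ) - d m
              = ((n.choose m : ℂ) * ((1-ρ)^m)⁻¹) *
                (ρ * ∑ j ∈ Icc 1 m, (m.choose j : ℂ) * (j:ℂ) * (1-ρ)^(m-j) * eulerianPoly (j-1) ρ)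
                - d m := by ring
            _ = ((n.choose m : ℂ) * ((1-ρ)^m)⁻¹) *
                ((m:ℂ) * eulerianPoly (m-1) ρ - (if m = 1 then (1-ρ) else 0)) - d m := by
                rw [hkey]
            _ = if m = 1 then -(n:ℂ) else 0 := by
                rw [hd]
                simp only
                rcases eq_or_ne m 1 with h | h
                · subst h
                  simp only [if_pos rfl]
                  rw [Nat.choose_one_right]
                  field_simp
                  simp only [if_true]
                  ring
                · rw [if_neg h, if_neg h]
                  ring
      _ = -((n:ℂ) * ω^(n-1)) := by
          rw [Finset.sum_congr rfl (fun m _ => ite_mul (m = 1) (-(n:ℂ)) 0 (ω^(n-m)))]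
          simp only [zero_mul]
          rw [Finset.sum_ite_eq' (Icc 1 n) 1 (fun m => -(n:ℂ) * ω^(n-m))]
          rw [if_pos (by simp [Finset.mem_Icc]; omega)]
          ring
  rw [main, neg_neg]
end

section
/- Let n be a positive integer and let ρ be a complex number with ρ ≠ 1. Then Σ_{j=1}^{n} (−1)^{j+1} · C(n,j) · j · (ρ−1)^{−j} · A_{j−1}(ρ) · ( ρ·Σ_{k=0}^{n−j} C(n−j,k) B_k − B_{n−j} ) = n·B_{n−1}, where B_k are the Bernoulli numbers. -/
open Finset Nat PowerSeries

/-- Stirling numbers of the second kind. -/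
def stir : ℕ → ℕ → ℕ
  | 0, 0 => 1
  | 0, _ + 1 => 0
  | _ + 1, 0 => 0
  | m + 1, k + 1 => (k + 1) * stir m (k + 1) + stir m k

lemma stir_succ_succ (m k : ℕ) : stir (m + 1) (k + 1) = (k + 1) * stir m (k + 1) + stir m k := rfl

lemma stir_zero_right (m : ℕ) : stir m 0 = if m = 0 then 1 else 0 := by
  cases m <;> rfl

lemma stir_eq_zero_of_lt : ∀ {m k : ℕ}, m < k → stir m k = 0 := by
  intro m
  induction m with
  | zero => intro k h; cases k
            · omega
            · rfl
  | succ m ih =>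
      intro k h
      cases k with
      | zero => omega
      | succ k => rw [stir_succ_succ, ih (by omega), ih (by omega)]; simp

/-- `x^m = Σ_k k! * S(m,k) * C(x,k)` in ℕ. -/
lemma pow_eq_sum_stir (m x : ℕ) :
    x ^ m = ∑ k ∈ range (m + 1), k.factorial * stir m k * x.choose k := by
  induction m with
  | zero => simp [stir_zero_right]
  | succ m ih =>
      have key : ∀ k, x * x.choose k = (k + 1) * x.choose (k + 1) + k * x.choose k := by
        intro k
        rcases le_or_gt k x with h | h
        · have h1 : x.choose (k + 1) * (k + 1) = x.choose k * (x - k) :=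
            Nat.choose_succ_right_eq x k
          have h2 : (k+1) * x.choose (k+1) = (x - k) * x.choose k := by
            rw [mul_comm, h1, mul_comm]
          rw [h2]
          have h3 : x - k + k = x := Nat.sub_add_cancel h
          nlinarith [h3]
        · rw [Nat.choose_eq_zero_of_lt h, Nat.choose_eq_zero_of_lt (by omega)]
          simp
      calc x ^ (m + 1) = (∑ k ∈ range (m + 1), k.factorial * stir m k * x.choose k) * x := by
            rw [← ih, pow_succ]
        _ = ∑ k ∈ range (m + 1), (k.factorial * stir m k * ((k + 1) * x.choose (k + 1))
              + k.factorial * stir m k * (k * x.choose k)) := by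
            rw [sum_mul]
            refine sum_congr rfl fun k _ => ?_
            rw [mul_assoc, mul_comm (x.choose k) x, key k]
            ring
        _ = ∑ k ∈ range (m + 1), (k+1).factorial * stir m k * x.choose (k + 1)
              + ∑ k ∈ range (m + 1), k.factorial * (k * stir m k) * x.choose k := by
            rw [sum_add_distrib]
            congr 1 <;> refine sum_congr rfl fun k _ => ?_
            · rw [Nat.factorial_succ]; ring
            · ring
        _ = ∑ k ∈ range (m + 1), (k+1).factorial * stir (m + 1) (k+1) * x.choose (k+1) := by
            have h2 : ∑ k ∈ range (m + 1), k ! * (k * stir m k) * x.choose k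
                = ∑ k ∈ range (m + 1), (k+1)! * ((k+1) * stir m (k+1)) * x.choose (k+1) := by
              rw [Finset.sum_range_succ' (fun k => k ! * (k * stir m k) * x.choose k) m,
                Finset.sum_range_succ (fun k => (k+1)! * ((k+1) * stir m (k+1)) * x.choose (k+1)) m]
              simp [stir_eq_zero_of_lt (Nat.lt_succ_self m)]
            rw [h2, ← Finset.sum_add_distrib]
            refine Finset.sum_congr rfl fun k _ => ?_
            rw [stir_succ_succ]
            ring
        _ = ∑ k ∈ range (m + 2), k.factorial * stir (m + 1) k * x.choose k := by
            rw [Finset.sum_range_succ' (fun k => k.factorial * stir (m+1) k * x.choose k) (m+1)]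
            simp [stir_zero_right]

/-- `Σ_{m≤M} C(M,m) S(m,k) = S(M+1,k+1)`. -/
lemma sum_choose_stir (M k : ℕ) :
    ∑ m ∈ range (M + 1), M.choose m * stir m k = stir (M + 1) (k + 1) := by
  induction M generalizing k with
  | zero => cases k <;> simp [stir_succ_succ, stir_zero_right, stir_eq_zero_of_lt]
  | succ M ih =>
      have pascal : ∀ m, (M+1).choose (m+1) = M.choose (m+1) + M.choose m :=
        fun m => by rw [Nat.choose_succ_succ]; ring
      calc ∑ m ∈ range (M + 2), (M+1).choose m * stir m k
          = stir 0 k + ∑ m ∈ range (M + 1), (M+1).choose (m+1) * stir (m+1) k := by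
            rw [Finset.sum_range_succ' (fun m => (M+1).choose m * stir m k) (M+1)]
            simp [add_comm]
        _ = stir 0 k + (∑ m ∈ range (M + 1), M.choose (m+1) * stir (m+1) k
              + ∑ m ∈ range (M + 1), M.choose m * stir (m+1) k) := by
            rw [← Finset.sum_add_distrib]
            congr 1
            refine Finset.sum_congr rfl fun m _ => ?_
            rw [pascal]
            ring
        _ = ∑ m ∈ range (M + 1), M.choose m * stir m k
              + ∑ m ∈ range (M + 1), M.choose m * stir (m+1) k := by
            rw [Finset.sum_range_succ' (fun m => M.choose m * stir m k) M]
            have : M.choose (M+1) = 0 := Nat.choose_eq_zero_of_lt (by omega)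
            rw [Finset.sum_range_succ (fun m => M.choose (m+1) * stir (m+1) k) M, this]
            simp [Nat.choose_zero_right]
            ring
        _ = stir (M + 2) (k + 1) := by
            cases k with
            | zero =>
                have : ∀ m ∈ range (M+1), M.choose m * stir (m+1) 0 = 0 := by
                  intro m _; simp [stir_zero_right]
                rw [Finset.sum_eq_zero this, ih, add_zero, stir_succ_succ M 0]
                have : stir (M+1+1) (0+1) = (0+1) * stir (M+1) (0+1) + stir (M+1) 0 :=
                  stir_succ_succ (M+1) 0
                rw [this, stir_succ_succ M 0]
                simp [stir_zero_right]
            | succ k =>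
                have h1 : ∑ m ∈ range (M + 1), M.choose m * stir (m+1) (k+1)
                    = (k+1) * stir (M+1) (k+2) + stir (M+1) (k+1) := by
                  calc ∑ m ∈ range (M + 1), M.choose m * stir (m+1) (k+1)
                      = ∑ m ∈ range (M + 1), ((k+1) * (M.choose m * stir m (k+1))
                          + M.choose m * stir m k) := by
                        refine Finset.sum_congr rfl fun m _ => ?_
                        rw [stir_succ_succ]; ring
                    _ = (k+1) * stir (M+1) (k+2) + stir (M+1) (k+1) := by
                        rw [Finset.sum_add_distrib, ← Finset.mul_sum, ih, ih]
                rw [ih, h1, stir_succ_succ (M+1) (k+1)]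
                ring

noncomputable def csr (k : ℕ) : ℂ⟦X⟧ := PowerSeries.mk fun u => (u.choose k : ℂ)

lemma csr_mul_one_sub (k : ℕ) : csr (k+1) * (1 - X) = X * csr k := by
  ext n
  rw [mul_sub, mul_one, map_sub]
  cases n with
  | zero => simp [csr, PowerSeries.coeff_zero_eq_constantCoeff]
  | succ n =>
      rw [PowerSeries.coeff_succ_mul_X]
      rw [PowerSeries.coeff_succ_X_mul]
      simp only [csr, PowerSeries.coeff_mk]
      rw [Nat.choose_succ_succ' n k]
      push_cast
      ring

lemma csr_mul_pow (k : ℕ) : csr k * (1 - X)^(k+1) = (X : ℂ⟦X⟧)^k := by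
  induction k with
  | zero =>
      ext n
      rw [pow_one, mul_sub, mul_one, map_sub, pow_zero]
      cases n with
      | zero => simp [csr]
      | succ n => simp [csr, PowerSeries.coeff_succ_mul_X, PowerSeries.coeff_one]
  | succ k ih =>
      calc csr (k+1) * (1 - X)^(k+2) = (csr (k+1) * (1 - X)) * (1-X)^(k+1) := by ring
        _ = X * (csr k * (1-X)^(k+1)) := by rw [csr_mul_one_sub]; ring
        _ = X^(k+1) := by rw [ih]; ring

lemma coeff_one_sub_X_pow (N j : ℕ) :
    PowerSeries.coeff (R := ℂ) j ((1 - X)^N) = (-1)^j * (N.choose j : ℂ) := by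
  have h : (1 - X : ℂ⟦X⟧)^N = ∑ v ∈ range (N+1), ((-1)^v * (N.choose v : ℂ)) • X^v := by
    have : (1 - X : ℂ⟦X⟧) = (-X) + 1 := by ring
    rw [this, add_pow]
    refine Finset.sum_congr rfl fun v _ => ?_
    rw [neg_pow]
    simp [smul_eq_C_mul]
    ring
  rw [h, map_sum]
  simp only [LinearMap.map_smul, PowerSeries.coeff_X_pow, smul_eq_mul]
  rw [Finset.sum_eq_single j]
  · rcases le_or_gt j N with h | h
    · simp
    · simp [Nat.choose_eq_zero_of_lt h]
  · intro v _ hv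
    simp [Ne.symm hv]
  · intro hj
    simp only [Finset.mem_range, not_lt] at hj
    rw [Nat.choose_eq_zero_of_lt (by omega)]
    simp

noncomputable def Dm (m : ℕ) : ℂ⟦X⟧ := PowerSeries.mk fun u => (u : ℂ)^m

lemma one_sub_pow (ρ : ℂ) (M : ℕ) :
    (1 - ρ)^M = ∑ i ∈ range (M+1), (-1)^i * (M.choose i : ℂ) * ρ^i := by
  have h : (1 - ρ) = -ρ + 1 := by ring
  rw [h, add_pow]
  refine Finset.sum_congr rfl fun v _ => ?_
  rw [neg_pow]
  ring

lemma eulerianNumber_eq_coeff (m j : ℕ) :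
    eulerianNumber m j = PowerSeries.coeff (R := ℂ) j ((1 - X)^(m+1) * Dm m) := by
  rw [PowerSeries.coeff_mul, Finset.Nat.sum_antidiagonal_eq_sum_range_succ
    (fun a b => PowerSeries.coeff (R := ℂ) a ((1 - X)^(m+1)) * PowerSeries.coeff (R := ℂ) b (Dm m))]
  simp only [Dm, PowerSeries.coeff_mk, coeff_one_sub_X_pow]
  refine Finset.sum_congr rfl fun v hv => ?_
  rw [Finset.mem_range] at hv
  rw [Nat.cast_sub (by omega : v ≤ j)]

lemma Dm_eq (m : ℕ) :
    Dm m = ∑ k ∈ range (m+1), ((k.factorial * stir m k : ℕ) : ℂ) • csr k := by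
  ext u
  simp only [map_sum, LinearMap.map_smul, Dm, csr, PowerSeries.coeff_mk, smul_eq_mul]
  rw [← Nat.cast_pow, pow_eq_sum_stir m u]
  push_cast
  rfl

lemma g_eq (m : ℕ) :
    (1 - X)^(m+1) * Dm m
      = ∑ k ∈ range (m+1), ((k.factorial * stir m k : ℕ) : ℂ) • (X^k * (1 - X)^(m-k)) := by
  rw [Dm_eq, Finset.mul_sum]
  refine Finset.sum_congr rfl fun k hk => ?_
  rw [Finset.mem_range] at hk
  rw [mul_smul_comm]
  congr 1
  have hsplit : m + 1 = (m - k) + (k + 1) := by omega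
  rw [hsplit, pow_add]
  calc (1-X : ℂ⟦X⟧)^(m-k) * (1-X)^(k+1) * csr k
      = (csr k * (1-X)^(k+1)) * (1-X)^(m-k) := by ring
    _ = X^k * (1-X)^(m-k) := by rw [csr_mul_pow]

lemma innerSum10 (m k : ℕ) (hk : k ≤ m) (ρ : ℂ) :
    ∑ j ∈ range (m+1), PowerSeries.coeff (R := ℂ) j (X^k * (1 - X)^(m-k) : ℂ⟦X⟧) * ρ^j
      = ρ^k * (1 - ρ)^(m-k) := by
  have hz : ∀ j ∈ range k, PowerSeries.coeff (R := ℂ) j (X^k * (1 - X)^(m-k) : ℂ⟦X⟧) * ρ^j = 0 := by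
    intro j hj
    rw [Finset.mem_range] at hj
    rw [PowerSeries.coeff_X_pow_mul', if_neg (by omega)]
    simp
  rw [Finset.range_eq_Ico, ← Finset.sum_Ico_consecutive _ (Nat.zero_le k) (by omega : k ≤ m+1),
    ← Finset.range_eq_Ico, Finset.sum_eq_zero hz, zero_add]
  rw [Finset.sum_Ico_eq_sum_range]
  have hlen : m + 1 - k = (m - k) + 1 := by omega
  rw [hlen]
  rw [one_sub_pow, Finset.mul_sum]
  refine Finset.sum_congr rfl fun i hi => ?_
  rw [add_comm k i, PowerSeries.coeff_X_pow_mul, coeff_one_sub_X_pow, pow_add]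
  ring

lemma eulerianPoly_closed (m : ℕ) (ρ : ℂ) :
    eulerianPoly m ρ
      = ∑ k ∈ range (m+1), ((k.factorial * stir m k : ℕ) : ℂ) * ρ^k * (1 - ρ)^(m-k) := by
  have h1 : eulerianPoly m ρ = ∑ j ∈ range (m+1),
      ∑ k ∈ range (m+1), ((k.factorial * stir m k : ℕ) : ℂ)
        * (PowerSeries.coeff (R := ℂ) j (X^k * (1 - X)^(m-k)) * ρ^j) := by
    refine Finset.sum_congr rfl fun j hj => ?_
    rw [eulerianNumber_eq_coeff, g_eq, map_sum, Finset.sum_mul]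
    simp only [LinearMap.map_smul, smul_eq_mul, mul_assoc]
  rw [h1, Finset.sum_comm]
  refine Finset.sum_congr rfl fun k hk => ?_
  rw [Finset.mem_range] at hk
  rw [← Finset.mul_sum, innerSum10 m k (by omega), mul_assoc]

noncomputable def bfun (ρ : ℂ) (m : ℕ) : ℂ := (-1)^m * ((ρ-1)⁻¹)^(m+1) * eulerianPoly m ρ

lemma bfun_closed (ρ : ℂ) (hρ : ρ - 1 ≠ 0) (m : ℕ) :
    bfun ρ m = ∑ k ∈ range (m+1), (-ρ)^k * ((ρ-1)⁻¹)^(k+1) * ((k.factorial * stir m k : ℕ) : ℂ) := by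
  rw [bfun, eulerianPoly_closed, Finset.mul_sum]
  refine Finset.sum_congr rfl fun k hk => ?_
  rw [Finset.mem_range] at hk
  have h1 : (1 - ρ)^(m-k) = (-1)^(m-k) * (ρ-1)^(m-k) := by
    rw [show (1-ρ) = -1 * (ρ-1) by ring, mul_pow]
  have h2 : ((-1:ℂ))^m = (-1)^(m-k) * (-1)^k := by
    rw [← pow_add]; congr 1; omega
  have h3 : ((ρ-1)⁻¹)^(m+1) = ((ρ-1)⁻¹)^(m-k) * ((ρ-1)⁻¹)^(k+1) := by
    rw [← pow_add]; congr 1; omega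
  have h4 : (ρ-1)^(m-k) * ((ρ-1)⁻¹)^(m-k) = 1 := by
    rw [← mul_pow, mul_inv_cancel₀ hρ, one_pow]
  have h5 : ((-1:ℂ))^(m-k) * (-1)^(m-k) = 1 := by
    rw [← mul_pow]; norm_num
  calc (-1:ℂ)^m * ((ρ-1)⁻¹)^(m+1) * (↑(k.factorial * stir m k) * ρ^k * (1-ρ)^(m-k))
      = ((ρ-1)^(m-k) * ((ρ-1)⁻¹)^(m-k)) * (((-1)^(m-k) * (-1)^(m-k)) * ((-1)^k * ρ^k
          * ((ρ-1)⁻¹)^(k+1) * ↑(k.factorial * stir m k))) := by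
        rw [h1, h2, h3]; ring
    _ = (-ρ)^k * ((ρ-1)⁻¹)^(k+1) * ↑(k.factorial * stir m k) := by
        rw [h4, h5, neg_pow]; ring


/-- The key convolution identity `ρ Σ_m C(M,m) b_m = b_M + [M=0]`. -/
lemma bfun_conv (ρ : ℂ) (hρ : ρ - 1 ≠ 0) (M : ℕ) :
    ρ * ∑ m ∈ range (M+1), (M.choose m : ℂ) * bfun ρ m
      = bfun ρ M + (if M = 0 then 1 else 0) := by
  have hwrec : ∀ k : ℕ, ρ * ((-ρ)^k * ((ρ-1)⁻¹)^(k+1))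
      = -(ρ-1) * ((-ρ)^(k+1) * ((ρ-1)⁻¹)^(k+2)) := by
    intro k
    have h : (ρ - 1) * (ρ-1)⁻¹ = 1 := mul_inv_cancel₀ hρ
    calc ρ * ((-ρ)^k * ((ρ-1)⁻¹)^(k+1))
        = ((ρ-1) * (ρ-1)⁻¹) * (ρ * ((-ρ)^k * ((ρ-1)⁻¹)^(k+1))) := by rw [h]; ring
      _ = -(ρ-1) * ((-ρ)^(k+1) * ((ρ-1)⁻¹)^(k+2)) := by
          rw [pow_succ (-ρ) k, show (k+2) = (k+1)+1 by rfl, pow_succ ((ρ-1)⁻¹) (k+1)]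
          ring
  have A1 : ∑ m ∈ range (M+1), (M.choose m : ℂ) * bfun ρ m
      = ∑ k ∈ range (M+1), ((-ρ)^k * ((ρ-1)⁻¹)^(k+1))
          * ((k.factorial * stir (M+1) (k+1) : ℕ) : ℂ) := by
    have hb : ∀ m ∈ range (M+1), (M.choose m : ℂ) * bfun ρ m
        = ∑ k ∈ range (M+1),
            (M.choose m : ℂ) * ((-ρ)^k * ((ρ-1)⁻¹)^(k+1) * ((k.factorial * stir m k : ℕ) : ℂ)) := by
      intro m hm
      rw [Finset.mem_range] at hm
      rw [bfun_closed ρ hρ m, Finset.mul_sum]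
      refine Finset.sum_subset (Finset.range_subset_range.2 (by omega : m + 1 ≤ M + 1))
        (fun k hk hk2 => ?_)
      simp only [Finset.mem_range, not_lt] at hk2
      rw [stir_eq_zero_of_lt (by omega : m < k)]
      simp
    rw [Finset.sum_congr rfl hb]
    refine Finset.sum_comm.trans ?_
    refine Finset.sum_congr rfl fun k hk => ?_
    rw [← sum_choose_stir M k]
    push_cast
    rw [Finset.mul_sum, Finset.mul_sum]
    refine Finset.sum_congr rfl fun m hm => ?_
    ring
  have A3 : ρ * ∑ m ∈ range (M+1), (M.choose m : ℂ) * bfun ρ m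
      = ∑ k ∈ range (M+1), (-(ρ-1)) * (((-ρ)^(k+1) * ((ρ-1)⁻¹)^(k+2))
            * (((k+1).factorial * stir M (k+1) : ℕ) : ℂ))
        + ρ * ∑ k ∈ range (M+1), ((-ρ)^k * ((ρ-1)⁻¹)^(k+1))
            * ((k.factorial * stir M k : ℕ) : ℂ) := by
    rw [A1, Finset.mul_sum, Finset.mul_sum, ← Finset.sum_add_distrib]
    refine Finset.sum_congr rfl fun k hk => ?_
    rw [stir_succ_succ]
    have expand : ((k.factorial * ((k+1) * stir M (k+1) + stir M k) : ℕ) : ℂ)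
        = (((k+1).factorial * stir M (k+1) : ℕ) : ℂ) + ((k.factorial * stir M k : ℕ) : ℂ) := by
      rw [Nat.factorial_succ]
      push_cast
      ring
    rw [expand, mul_add, mul_add]
    rw [← mul_assoc ρ, hwrec k]
    try ring
  have A4 : ∑ k ∈ range (M+1), ((-ρ)^(k+1) * ((ρ-1)⁻¹)^(k+2))
        * (((k+1).factorial * stir M (k+1) : ℕ) : ℂ)
      = ∑ k ∈ range (M+1), ((-ρ)^k * ((ρ-1)⁻¹)^(k+1)) * ((k.factorial * stir M k : ℕ) : ℂ)
        - (ρ-1)⁻¹ * (if M = 0 then 1 else 0) := by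
    have h1 := Finset.sum_range_succ'
      (fun k => ((-ρ)^k * ((ρ-1)⁻¹)^(k+1)) * ((k.factorial * stir M k : ℕ) : ℂ)) (M+1)
    have h2 : ∑ k ∈ range (M+2), ((-ρ)^k * ((ρ-1)⁻¹)^(k+1)) * ((k.factorial * stir M k : ℕ) : ℂ)
        = ∑ k ∈ range (M+1), ((-ρ)^k * ((ρ-1)⁻¹)^(k+1)) * ((k.factorial * stir M k : ℕ) : ℂ) := by
      rw [Finset.sum_range_succ, stir_eq_zero_of_lt (Nat.lt_succ_self M)]
      simp
    rw [h2] at h1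
    have h0 : (((0:ℕ).factorial * stir M 0 : ℕ) : ℂ) = (if M = 0 then 1 else 0) := by
      rw [stir_zero_right]
      split <;> simp
    rw [h0] at h1
    have : ∀ k : ℕ, (k+1) + 1 = k + 2 := fun k => rfl
    simp only [this] at h1
    rw [eq_sub_iff_add_eq, h1]
    simp only [pow_zero, pow_one, one_mul]
    try ring
  have hbM : bfun ρ M = ∑ k ∈ range (M+1),
      ((-ρ)^k * ((ρ-1)⁻¹)^(k+1)) * ((k.factorial * stir M k : ℕ) : ℂ) := by
    rw [bfun_closed ρ hρ M]
  rw [A3, ← Finset.mul_sum, A4, ← hbM]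
  have h := mul_inv_cancel₀ hρ
  have hcomm : -(ρ-1) * (bfun ρ M - (ρ-1)⁻¹ * (if M = 0 then 1 else 0)) + ρ * bfun ρ M
      = bfun ρ M + ((ρ-1) * (ρ-1)⁻¹) * (if M = 0 then 1 else 0) := by ring
  rw [hcomm, h, one_mul]

noncomputable def bS (ρ : ℂ) : ℂ⟦X⟧ := PowerSeries.mk fun m => bfun ρ m * ((m.factorial : ℂ))⁻¹

lemma coeff_exp_c (j : ℕ) : PowerSeries.coeff (R := ℂ) j (exp ℂ) = ((j.factorial : ℂ))⁻¹ := by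
  rw [PowerSeries.coeff_exp, eq_ratCast]
  push_cast
  rw [one_div]

lemma key1 (ρ : ℂ) (hρ : ρ - 1 ≠ 0) : bS ρ * (PowerSeries.C (R := ℂ) ρ * exp ℂ - 1) = 1 := by
  ext n
  rw [PowerSeries.coeff_mul, PowerSeries.coeff_one]
  rw [Finset.Nat.sum_antidiagonal_eq_sum_range_succ
    (fun a b => PowerSeries.coeff (R := ℂ) a (bS ρ) * PowerSeries.coeff (R := ℂ) b (PowerSeries.C (R := ℂ) ρ * exp ℂ - 1))]
  have hcoeff : ∀ b, PowerSeries.coeff (R := ℂ) b (PowerSeries.C (R := ℂ) ρ * exp ℂ - 1)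
      = ρ * ((b.factorial : ℂ))⁻¹ - (if b = 0 then 1 else 0) := by
    intro b
    rw [map_sub, PowerSeries.coeff_C_mul, coeff_exp_c, PowerSeries.coeff_one]
  have hfac : ∀ m, m ≤ n → ((m.factorial : ℂ))⁻¹ * (((n-m).factorial : ℂ))⁻¹
      = (n.choose m : ℂ) * ((n.factorial : ℂ))⁻¹ := by
    intro m hm
    have h := Nat.choose_mul_factorial_mul_factorial hm
    have h' : (n.choose m : ℂ) * (m.factorial : ℂ) * ((n-m).factorial : ℂ) = (n.factorial : ℂ) := by
      exact_mod_cast congrArg (Nat.cast : ℕ → ℂ) h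
    have h1 : (m.factorial : ℂ) ≠ 0 := Nat.cast_ne_zero.2 (Nat.factorial_ne_zero m)
    have h2 : (((n-m).factorial : ℂ)) ≠ 0 := Nat.cast_ne_zero.2 (Nat.factorial_ne_zero _)
    have h3 : ((n.factorial : ℂ)) ≠ 0 := Nat.cast_ne_zero.2 (Nat.factorial_ne_zero n)
    have hC0 : (n.choose m : ℂ) ≠ 0 :=
      Nat.cast_ne_zero.2 (Nat.choose_pos hm).ne'
    rw [← h']
    field_simp
  have split : ∑ m ∈ range (n+1), PowerSeries.coeff (R := ℂ) m (bS ρ)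
        * (ρ * (((n-m).factorial : ℂ))⁻¹ - (if n - m = 0 then 1 else 0))
      = ρ * ((n.factorial : ℂ))⁻¹ * ∑ m ∈ range (n+1), (n.choose m : ℂ) * bfun ρ m
        - bfun ρ n * ((n.factorial : ℂ))⁻¹ := by
    have e1 : ∀ m ∈ range (n+1), PowerSeries.coeff (R := ℂ) m (bS ρ)
        * (ρ * (((n-m).factorial : ℂ))⁻¹ - (if n - m = 0 then 1 else 0))
        = ρ * ((n.factorial : ℂ))⁻¹ * ((n.choose m : ℂ) * bfun ρ m)
          - (if m = n then bfun ρ n * ((n.factorial : ℂ))⁻¹ else 0) := by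
      intro m hm
      rw [Finset.mem_range] at hm
      have hm' : m ≤ n := by omega
      rw [bS, PowerSeries.coeff_mk, mul_sub]
      congr 1
      · rw [show bfun ρ m * ((m.factorial:ℂ))⁻¹ * (ρ * (((n-m).factorial : ℂ))⁻¹)
          = ρ * (((m.factorial : ℂ))⁻¹ * (((n-m).factorial : ℂ))⁻¹) * bfun ρ m by ring,
          hfac m hm']
        ring
      · rcases eq_or_ne m n with rfl | hne
        · simp
        · rw [if_neg hne, if_neg (by omega : ¬ n - m = 0), mul_zero]
    rw [Finset.sum_congr rfl e1, Finset.sum_sub_distrib, ← Finset.mul_sum,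
      Finset.sum_ite_eq' (range (n+1)) n (fun _ => bfun ρ n * ((n.factorial : ℂ))⁻¹),
      if_pos (Finset.self_mem_range_succ n)]
  rw [Finset.sum_congr rfl (fun m _ => by rw [hcoeff]), split]
  have hre : ρ * ((n.factorial:ℂ))⁻¹ * (∑ m ∈ range (n+1), (n.choose m : ℂ) * bfun ρ m)
      = ((n.factorial:ℂ))⁻¹ * (ρ * ∑ m ∈ range (n+1), (n.choose m : ℂ) * bfun ρ m) := by ring
  rw [hre, bfun_conv ρ hρ n]
  rcases eq_or_ne n 0 with rfl | hn
  · simp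
  · simp only [if_neg hn]
    ring

lemma exp_sub_one_ne_zero : exp ℂ - 1 ≠ 0 := by
  intro h
  have h1 := congrArg (PowerSeries.coeff (R := ℂ) 1) h
  rw [map_sub, coeff_exp_c, PowerSeries.coeff_one] at h1
  simp [Nat.factorial] at h1

lemma key2 (ρ : ℂ) (hρ : ρ - 1 ≠ 0) :
    bS ρ * (PowerSeries.C (R := ℂ) (ρ-1) * bernoulliPowerSeries ℂ + PowerSeries.C (R := ℂ) ρ * X)
      = bernoulliPowerSeries ℂ := by
  have hB := bernoulliPowerSeries_mul_exp_sub_one ℂ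
  have h1 := key1 ρ hρ
  have hC : PowerSeries.C (R := ℂ) (ρ-1) = PowerSeries.C (R := ℂ) ρ - 1 := by rw [map_sub, map_one]
  have hX : (X : ℂ⟦X⟧) ≠ 0 := X_ne_zero
  apply mul_left_cancel₀ hX
  apply mul_right_cancel₀ exp_sub_one_ne_zero
  rw [hC]
  linear_combination (X*(X:ℂ⟦X⟧)) * h1 + (X * bS ρ * (PowerSeries.C (R := ℂ) ρ - 1) - X) * hB

lemma sum_bern_c (ρ : ℂ) (m : ℕ) :
    ρ * (∑ k ∈ Finset.range (m + 1), (m.choose k : ℂ) * (bernoulli k : ℂ)) - (bernoulli m : ℂ)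
      = (ρ-1) * (bernoulli m : ℂ) + ρ * (if m = 1 then 1 else 0) := by
  have h := sum_bernoulli m
  have hc : (∑ k ∈ Finset.range m, (m.choose k : ℂ) * (bernoulli k : ℂ))
      = (if m = 1 then 1 else 0) := by
    have := congrArg (Rat.cast : ℚ → ℂ) h
    push_cast at this
    rw [this]
    split <;> simp
  rw [Finset.sum_range_succ, hc, Nat.choose_self]
  ring

lemma coeff_cc (ρ : ℂ) (k : ℕ) :
    PowerSeries.coeff (R := ℂ) k (PowerSeries.C (R := ℂ) (ρ-1) * bernoulliPowerSeries ℂ + PowerSeries.C (R := ℂ) ρ * X)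
      = ((ρ-1) * (bernoulli k : ℂ) + ρ * (if k = 1 then 1 else 0)) * ((k.factorial : ℂ))⁻¹ := by
  rw [map_add, PowerSeries.coeff_C_mul, PowerSeries.coeff_C_mul, PowerSeries.coeff_X]
  rw [bernoulliPowerSeries, PowerSeries.coeff_mk, eq_ratCast]
  push_cast
  rcases eq_or_ne k 1 with rfl | hk
  · simp [Nat.factorial]
  · simp only [if_neg hk]
    rw [div_eq_mul_inv]
    ring
/-- Here `bernoulli` is Mathlib's Bernoulli-number sequence with `B₁ = −1/2`, i.e. the one
defined by `t/(e^t − 1) = Σ_{k≥0} B_k t^k/k!`. -/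
theorem stmt10 (n : ℕ) (hn : 0 < n) (ρ : ℂ) (hρ : ρ ≠ 1) :
    ∑ j ∈ Finset.Icc 1 n,
        (-1 : ℂ) ^ (j + 1) * (n.choose j : ℂ) * (j : ℂ) * (ρ - 1) ^ (-(j : ℤ)) *
          eulerianPoly (j - 1) ρ *
          (ρ * (∑ k ∈ Finset.range (n - j + 1), ((n - j).choose k : ℂ) * (bernoulli k : ℂ)) -
            (bernoulli (n - j) : ℂ)) =
      (n : ℂ) * (bernoulli (n - 1) : ℂ) := by
  obtain ⟨N, rfl⟩ : ∃ N, n = N + 1 := ⟨n - 1, by omega⟩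
  have hρ1 : ρ - 1 ≠ 0 := sub_ne_zero.2 hρ
  set ℭ : ℂ⟦X⟧ := PowerSeries.C (R := ℂ) (ρ-1) * bernoulliPowerSeries ℂ + PowerSeries.C (R := ℂ) ρ * X with hℭ
  have hco : ∑ m ∈ range (N+1),
      PowerSeries.coeff (R := ℂ) m (bS ρ) * PowerSeries.coeff (R := ℂ) (N-m) ℭ
      = PowerSeries.coeff (R := ℂ) N (bernoulliPowerSeries ℂ) := by
    rw [← Finset.Nat.sum_antidiagonal_eq_sum_range_succ
      (fun a b => PowerSeries.coeff (R := ℂ) a (bS ρ) * PowerSeries.coeff (R := ℂ) b ℭ),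
      ← PowerSeries.coeff_mul, key2 ρ hρ1]
  have hBn : PowerSeries.coeff (R := ℂ) N (bernoulliPowerSeries ℂ)
      = (bernoulli N : ℂ) * ((N.factorial : ℂ))⁻¹ := by
    rw [bernoulliPowerSeries, PowerSeries.coeff_mk, eq_ratCast]
    push_cast
    rw [div_eq_mul_inv]
  have hterm : ∀ i ∈ range (N+1),
      (-1 : ℂ) ^ ((i+1) + 1) * (((N+1).choose (i+1) : ℕ) : ℂ) * ((i+1 : ℕ) : ℂ)
          * (ρ - 1) ^ (-((i+1 : ℕ) : ℤ)) * eulerianPoly ((i+1) - 1) ρ *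
          (ρ * (∑ k ∈ Finset.range ((N+1) - (i+1) + 1), ((((N+1) - (i+1)).choose k : ℕ) : ℂ)
              * (bernoulli k : ℂ)) - (bernoulli ((N+1) - (i+1)) : ℂ))
        = (((N+1 : ℕ)) : ℂ) * ((N.factorial : ℕ) : ℂ)
            * (PowerSeries.coeff (R := ℂ) i (bS ρ) * PowerSeries.coeff (R := ℂ) (N-i) ℭ) := by
    intro i hi
    rw [Finset.mem_range] at hi
    have hii : (N+1) - (i+1) = N - i := by omega
    have hid : (i+1) - 1 = i := rfl
    rw [hii, hid]
    have hzpow : (ρ - 1) ^ (-((i+1 : ℕ) : ℤ)) = ((ρ-1)⁻¹)^(i+1) := by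
      rw [zpow_neg, ← inv_zpow, zpow_natCast]
    have hlast : ρ * (∑ k ∈ Finset.range ((N-i) + 1), (((N-i).choose k : ℕ) : ℂ)
          * (bernoulli k : ℂ)) - (bernoulli (N-i) : ℂ)
        = PowerSeries.coeff (R := ℂ) (N-i) ℭ * (((N-i).factorial : ℕ) : ℂ) := by
      rw [sum_bern_c ρ (N-i), hℭ, coeff_cc ρ (N-i)]
      have hf : (((N-i).factorial : ℕ) : ℂ) ≠ 0 := Nat.cast_ne_zero.2 (Nat.factorial_ne_zero _)
      field_simp
    have hbS : PowerSeries.coeff (R := ℂ) i (bS ρ) = bfun ρ i * ((i.factorial : ℂ))⁻¹ := by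
      rw [bS, PowerSeries.coeff_mk]
    have hNat : ((N+1).choose (i+1)) * ((i+1) * i.factorial) * ((N-i).factorial)
        = (N+1) * N.factorial := by
      have h := Nat.choose_mul_factorial_mul_factorial (show i+1 ≤ N+1 by omega)
      rw [show (N+1) - (i+1) = N - i by omega] at h
      rw [show (i+1) * i.factorial = (i+1).factorial from rfl, h, Nat.factorial_succ]
    have hNatC : (((N+1).choose (i+1) : ℕ) : ℂ) * ((i+1 : ℕ) : ℂ) * ((i.factorial : ℕ) : ℂ)
          * (((N-i).factorial : ℕ) : ℂ) = (((N+1) : ℕ) : ℂ) * ((N.factorial : ℕ) : ℂ) := by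
      have := congrArg (Nat.cast : ℕ → ℂ) hNat
      push_cast at this ⊢
      linear_combination this
    have hbf : PowerSeries.coeff (R := ℂ) i (bS ρ) * ((i.factorial : ℕ) : ℂ)
        = (-1:ℂ)^i * ((ρ-1)⁻¹)^(i+1) * eulerianPoly i ρ := by
      rw [hbS, bfun]
      have hi0 : ((i.factorial : ℕ) : ℂ) ≠ 0 := Nat.cast_ne_zero.2 (Nat.factorial_ne_zero _)
      field_simp
    have hneg : (-1 : ℂ) ^ ((i+1)+1) = (-1)^i := by
      rw [show (i+1)+1 = i+2 from rfl, pow_add]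
      norm_num
    rw [hlast, hzpow, hneg]
    linear_combination
      (-((((N+1).choose (i+1) : ℕ) : ℂ) * ((i+1 : ℕ) : ℂ) * (((N-i).factorial : ℕ) : ℂ)
        * PowerSeries.coeff (R := ℂ) (N-i) ℭ)) * hbf
      + (PowerSeries.coeff (R := ℂ) i (bS ρ) * PowerSeries.coeff (R := ℂ) (N-i) ℭ) * hNatC
  calc ∑ j ∈ Finset.Icc 1 (N+1),
        (-1 : ℂ) ^ (j + 1) * (((N+1).choose j : ℕ) : ℂ) * ((j : ℕ) : ℂ) * (ρ - 1) ^ (-(j : ℤ)) *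
          eulerianPoly (j - 1) ρ *
          (ρ * (∑ k ∈ Finset.range ((N+1) - j + 1), ((((N+1) - j).choose k : ℕ) : ℂ)
            * (bernoulli k : ℂ)) - (bernoulli ((N+1) - j) : ℂ))
      = ∑ i ∈ range (N+1),
        (-1 : ℂ) ^ ((i+1) + 1) * (((N+1).choose (i+1) : ℕ) : ℂ) * ((i+1 : ℕ) : ℂ)
          * (ρ - 1) ^ (-((i+1 : ℕ) : ℤ)) * eulerianPoly ((i+1) - 1) ρ *
          (ρ * (∑ k ∈ Finset.range ((N+1) - (i+1) + 1), ((((N+1) - (i+1)).choose k : ℕ) : ℂ)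
            * (bernoulli k : ℂ)) - (bernoulli ((N+1) - (i+1)) : ℂ)) := by
        rw [← Finset.Ico_add_one_right_eq_Icc, Finset.sum_Ico_eq_sum_range]
        refine Finset.sum_congr (by norm_num) fun i _ => ?_
        rw [Nat.add_comm 1 i]
    _ = (((N+1) : ℕ) : ℂ) * ((N.factorial : ℕ) : ℂ)
          * ∑ i ∈ range (N+1), PowerSeries.coeff (R := ℂ) i (bS ρ) * PowerSeries.coeff (R := ℂ) (N-i) ℭ := by
        rw [Finset.mul_sum]
        exact Finset.sum_congr rfl hterm
    _ = (((N+1) : ℕ) : ℂ) * (bernoulli N : ℂ) := by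
        rw [hco, hBn]
        have hN0 : ((N.factorial : ℕ) : ℂ) ≠ 0 := Nat.cast_ne_zero.2 (Nat.factorial_ne_zero _)
        field_simp
    _ = (((N+1) : ℕ) : ℂ) * (bernoulli ((N+1) - 1) : ℂ) := by norm_num
end

section
/- Let n, p be nonnegative integers and let ω be a real number with p ≤ ω ≤ p+1. Then N_{0,n}(ω;p) = (1/n!) · Σ_{v=0}^{n} (−1)^v · C(n,v) · Σ_{j=0}^{p} ( B_j^v(ω−j) − B_{j−1}^v(ω−j) ). -/
open Finset Nat

/-- The uniform B-spline basis (Schoenberg's identity):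
`N_{0,n}(ω;p) = (1/n!) Σ_{j=0}^p (−1)^j C(n+1,j) (ω−j)^n`. -/
noncomputable def Nspline (n p : ℕ) (ω : ℝ) : ℝ :=
  (1 / (n ! : ℝ)) *
    ∑ j ∈ Finset.range (p + 1), (-1 : ℝ) ^ j * ((n + 1).choose j : ℝ) * (ω - j) ^ n

/-- The Bernstein basis functions `B_d^k(ω) = C(k,d) ω^d (1−ω)^{k−d}` for `0 ≤ d ≤ k`,
and `0` otherwise (in particular for `d < 0`). -/
noncomputable def bern (k : ℕ) (d : ℤ) (ω : ℝ) : ℝ :=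
  if 0 ≤ d ∧ d ≤ (k : ℤ) then (k.choose d.toNat : ℝ) * ω ^ d.toNat * (1 - ω) ^ (k - d.toNat)
  else 0

lemma bern_natCast (k d : ℕ) (x : ℝ) :
    bern k (d : ℤ) x =
      if d ≤ k then (k.choose d : ℝ) * x ^ d * (1 - x) ^ (k - d) else 0 := by
  unfold bern
  simp [Int.toNat_natCast]

lemma key (n d : ℕ) (x : ℝ) :
    ∑ v ∈ Finset.range (n + 1), (-1 : ℝ) ^ v * (n.choose v : ℝ) * bern v (d : ℤ) x
      = (-1 : ℝ) ^ d * (n.choose d : ℝ) * x ^ n := by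
  rcases le_or_gt d n with hd | hd
  · have hsub : Finset.Ico d (n + 1) ⊆ Finset.range (n + 1) := by
      intro v hv
      simp only [Finset.mem_Ico] at hv
      simp [hv.2]
    rw [← Finset.sum_subset hsub (by
      intro v hv hv'
      simp only [Finset.mem_range] at hv
      simp only [Finset.mem_Ico, not_and, not_lt] at hv'
      have hvd : v < d := by
        by_contra h
        exact absurd (hv' (le_of_not_gt h)) (Nat.not_le.mpr hv)
      rw [bern_natCast]
      simp [Nat.not_le.mpr hvd])]
    rw [Finset.sum_Ico_eq_sum_range]
    have hlen : n + 1 - d = n - d + 1 := by omega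
    rw [hlen]
    have hstep : ∀ u ∈ Finset.range (n - d + 1),
        (-1 : ℝ) ^ (d + u) * (n.choose (d + u) : ℝ) * bern (d + u) (d : ℤ) x
          = ((-1 : ℝ) ^ d * (n.choose d : ℝ) * x ^ d) *
              (((n - d).choose u : ℝ) * (x - 1) ^ u) := by
      intro u hu
      simp only [Finset.mem_range] at hu
      have h1 : d ≤ d + u := Nat.le_add_right d u
      rw [bern_natCast, if_pos h1]
      have h2 : d + u - d = u := by omega
      rw [h2]
      have h3 : (n.choose (d + u) : ℝ) * ((d + u).choose d : ℝ)
          = (n.choose d : ℝ) * ((n - d).choose u : ℝ) := by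
        rw [← Nat.cast_mul, ← Nat.cast_mul, Nat.choose_mul h1, h2]
      have h4 : ((-1 : ℝ)) ^ u * (1 - x) ^ u = (x - 1) ^ u := by
        rw [← neg_pow]; ring_nf
      calc (-1 : ℝ) ^ (d + u) * (n.choose (d + u) : ℝ) *
            (((d + u).choose d : ℝ) * x ^ d * (1 - x) ^ u)
          = ((-1 : ℝ) ^ d * x ^ d) * ((n.choose (d + u) : ℝ) * ((d + u).choose d : ℝ))
              * ((-1 : ℝ) ^ u * (1 - x) ^ u) := by rw [pow_add]; ring
        _ = ((-1 : ℝ) ^ d * x ^ d) * ((n.choose d : ℝ) * ((n - d).choose u : ℝ))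
              * ((x - 1) ^ u) := by rw [h3, h4]
        _ = ((-1 : ℝ) ^ d * (n.choose d : ℝ) * x ^ d) *
              (((n - d).choose u : ℝ) * (x - 1) ^ u) := by ring
    rw [Finset.sum_congr rfl hstep, ← Finset.mul_sum]
    have hbin : ∑ u ∈ Finset.range (n - d + 1), ((n - d).choose u : ℝ) * (x - 1) ^ u
        = x ^ (n - d) := by
      have := add_pow (x - 1) 1 (n - d)
      simp only [one_pow, mul_one, sub_add_cancel] at this
      rw [this]
      exact Finset.sum_congr rfl (by intro u _; ring)
    rw [hbin]
    have : x ^ d * x ^ (n - d) = x ^ n := by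
      rw [← pow_add]; congr 1; omega
    calc (-1 : ℝ) ^ d * (n.choose d : ℝ) * x ^ d * x ^ (n - d)
        = (-1 : ℝ) ^ d * (n.choose d : ℝ) * (x ^ d * x ^ (n - d)) := by ring
      _ = (-1 : ℝ) ^ d * (n.choose d : ℝ) * x ^ n := by rw [this]
  · rw [Nat.choose_eq_zero_of_lt hd]
    simp only [Nat.cast_zero, mul_zero, zero_mul]
    apply Finset.sum_eq_zero
    intro v hv
    simp only [Finset.mem_range] at hv
    rw [bern_natCast, if_neg (by omega)]
    ring

theorem stmt14 (n p : ℕ) (ω : ℝ) (h1 : (p : ℝ) ≤ ω) (h2 : ω ≤ (p : ℝ) + 1) :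
    Nspline n p ω =
      (1 / (n ! : ℝ)) *
        ∑ v ∈ Finset.range (n + 1), (-1 : ℝ) ^ v * (n.choose v : ℝ) *
          ∑ j ∈ Finset.range (p + 1),
            (bern v (j : ℤ) (ω - j) - bern v ((j : ℤ) - 1) (ω - j)) := by
  unfold Nspline
  congr 1
  symm
  calc ∑ v ∈ Finset.range (n + 1), (-1 : ℝ) ^ v * (n.choose v : ℝ) *
          ∑ j ∈ Finset.range (p + 1),
            (bern v (j : ℤ) (ω - j) - bern v ((j : ℤ) - 1) (ω - j))
      = ∑ j ∈ Finset.range (p + 1), ∑ v ∈ Finset.range (n + 1),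
          (-1 : ℝ) ^ v * (n.choose v : ℝ) *
            (bern v (j : ℤ) (ω - j) - bern v ((j : ℤ) - 1) (ω - j)) := by
        simp_rw [Finset.mul_sum]; exact Finset.sum_comm
    _ = ∑ j ∈ Finset.range (p + 1),
          (-1 : ℝ) ^ j * (((n + 1).choose j : ℕ) : ℝ) * (ω - j) ^ n := by
        apply Finset.sum_congr rfl
        intro j _
        simp_rw [mul_sub, Finset.sum_sub_distrib]
        rw [key n j (ω - j)]
        match j with
        | 0 =>
          have hz : ∀ v ∈ Finset.range (n + 1),
              (-1 : ℝ) ^ v * (n.choose v : ℝ) * bern v (((0:ℕ) : ℤ) - 1) (ω - (0:ℕ)) = 0 := by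
            intro v _
            have : bern v (((0:ℕ) : ℤ) - 1) (ω - (0:ℕ)) = 0 := by
              unfold bern; rw [if_neg]; omega
            rw [this]; ring
          rw [Finset.sum_eq_zero hz]
          simp
        | k + 1 =>
          have hc : ((k + 1 : ℕ) : ℤ) - 1 = (k : ℤ) := by push_cast; ring
          simp_rw [hc]
          rw [key n k (ω - (k + 1 : ℕ))]
          have hp : (((n + 1).choose (k + 1) : ℕ) : ℝ)
              = (n.choose k : ℝ) + (n.choose (k + 1) : ℝ) := by
            rw [Nat.choose_succ_succ]; push_cast; ring
          rw [hp]
          ring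
end
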